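/- arXiv:2108.09708 — 3 statements merged into one kernel-verified Lean document; each statement's English description precedes it below -/
import Mathlib

section
/- Let K be an abstract elementary class in a finitary language L with λ = LS(K). Then for every L-structure M: M ∈ K if and only if Player II has a winning strategy in the decomposition game G_{ω·ω}(M) of length ω·ω. -/
universe u

open FirstOrder FirstOrder.Language Cardinal

namespace AECFormalization

variable (L : FirstOrder.Language.{u, u}) (U : Type u)

/-- An `L`-structure whose universe is a subset of a fixed ambient type `U`. -/
structure SStr : Type u where
  s : Set U
  str : L.Structure s

attribute [instance] SStr.str

variable {L U}

/-- The literal `L`-substructure relation between structures with universes inside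
the same ambient type: the universe of `M` is a subset of that of `N`, and the
interpretations of all function and relation symbols agree. -/
def SStr.Sub (M N : SStr L U) : Prop :=
  ∃ h : M.s ⊆ N.s,
    (∀ (n : ℕ) (f : L.Functions n) (x : Fin n → M.s),
      ((Structure.funMap f x : M.s) : U)
        = ((Structure.funMap f (fun i => Set.inclusion h (x i)) : N.s) : U)) ∧
    (∀ (n : ℕ) (r : L.Relations n) (x : Fin n → M.s),
      Structure.RelMap r x ↔ Structure.RelMap r (fun i => Set.inclusion h (x i)))

/-- `M` and `N` are isomorphic `L`-structures. -/
def SStr.Iso (M N : SStr L U) : Prop :=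
  Nonempty (M.s ≃[L] N.s)

/-- `(M₁, N₁) ≅ (M₂, N₂)` : there is an isomorphism `f : N₁ ≅ N₂` carrying `M₁`
exactly onto `M₂` (so that `f ↾ M₁ : M₁ ≅ M₂` whenever the `Mᵢ` are substructures
of the `Nᵢ`). -/
def PairIso (M₁ N₁ M₂ N₂ : SStr L U) : Prop :=
  ∃ f : N₁.s ≃[L] N₂.s, ∀ x : N₁.s, (x : U) ∈ M₁.s ↔ ((f x : N₂.s) : U) ∈ M₂.s

/-- `K`, together with the strong substructure relation `le`, is an abstract elementary
class with Löwenheim–Skolem number `lam`, among `L`-structures with universe contained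
in the ambient type `U` (only members of cardinality `≥ lam = LS(K)` are considered). -/
structure IsAEC (L : FirstOrder.Language.{u, u}) (U : Type u) (K : Set (SStr L U))
    (le : SStr L U → SStr L U → Prop) (lam : Cardinal.{u}) : Prop where
  le_refl : ∀ M ∈ K, le M M
  le_trans : ∀ {M N P : SStr L U}, le M N → le N P → le M P
  le_antisymm : ∀ {M N : SStr L U}, le M N → le N M → M = N
  mem_of_le : ∀ {M N : SStr L U}, le M N → M ∈ K ∧ N ∈ K
  sub_of_le : ∀ {M N : SStr L U}, le M N → M.Sub N
  mem_of_iso : ∀ {M N : SStr L U}, M ∈ K → M.Iso N → N ∈ K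
  le_of_iso : ∀ {M₁ N₁ M₂ N₂ : SStr L U}, le M₁ N₁ → M₂.Sub N₂ →
    PairIso M₁ N₁ M₂ N₂ → le M₂ N₂
  coherence : ∀ {M₁ M₂ M₃ : SStr L U}, le M₁ M₃ → le M₂ M₃ → M₁.Sub M₂ → le M₁ M₂
  lam_infinite : ℵ₀ ≤ lam
  lam_ge_card : L.card ≤ lam
  card_mem : ∀ M ∈ K, lam ≤ #M.s
  loewenheim_skolem : ∀ M ∈ K, ∀ A : Set U, A ⊆ M.s →
    ∃ N : SStr L U, le N M ∧ A ⊆ N.s ∧ #N.s ≤ lam + #A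
  ls_minimal : ∀ μ : Cardinal.{u}, ℵ₀ ≤ μ → L.card ≤ μ →
    (∀ M ∈ K, ∀ A : Set U, A ⊆ M.s →
      ∃ N : SStr L U, le N M ∧ A ⊆ N.s ∧ #N.s ≤ μ + #A) → lam ≤ μ
  chain : ∀ (ι : Type u) [LinearOrder ι] [IsWellOrder ι (· < ·)] [Nonempty ι]
    (M : ι → SStr L U), (∀ i j, i < j → le (M i) (M j)) → (∀ i, M i ∈ K) →
    ∃ MU : SStr L U, MU.s = ⋃ i, (M i).s ∧ MU ∈ K ∧ (∀ i, le (M i) MU) ∧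
      ∀ N : SStr L U, (∀ i, le (M i) N) → le MU N

/-- `I(lam, K)` : the number of isomorphism classes of members of `K` of cardinality
`lam` (computed among structures with universe inside the ambient type). -/
noncomputable def numModels (K : Set (SStr L U)) (lam : Cardinal.{u}) : Cardinal.{u} :=
  #(Quot fun M N : {M : SStr L U // M ∈ K ∧ #M.s = lam} => M.1.Iso N.1)

/-- `I₂(lam, K)` : the number of isomorphism classes of pairs `(M, N)` with
`M ≤_K N`, both of cardinality `lam`. -/
noncomputable def numPairs (K : Set (SStr L U)) (le : SStr L U → SStr L U → Prop)
    (lam : Cardinal.{u}) : Cardinal.{u} :=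
  #(Quot fun p q : {p : SStr L U × SStr L U //
      p.1 ∈ K ∧ p.2 ∈ K ∧ le p.1 p.2 ∧ #p.1.s = lam ∧ #p.2.s = lam} =>
    PairIso p.1.1 p.1.2 q.1.1 q.1.2)

end AECFormalization

namespace AECFormalization

/-- Player II has a winning strategy in the decomposition game `G_δ(M)` of length `δ`
(relative to `K`, `le` and `lam = LS(K)`):  there is a strategy `σ`, responding to the
history of Player I's moves (Player II's own earlier moves being recovered by following
the strategy), such that in every play in which Player I's moves `X β` (for `β ≤ α`) are
legal — i.e. subsets of the universe of `M` of cardinality at most `lam` — Player II's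
move `σ X α` at round `α < δ` is legal: it is (the universe of) an `L`-substructure
`Y_α` of `M` of cardinality `lam` with `X_α ⊆ Y_α`, whose induced structure belongs to
`K`, and with `Y_β ≤_K Y_α` for all `β < α`. -/
def WinsII (K : Set (SStr L U)) (le : SStr L U → SStr L U → Prop) (lam : Cardinal.{u})
    (M : SStr L U) (δ : Ordinal.{u}) : Prop :=
  ∃ σ : (Ordinal.{u} → Set U) → Ordinal.{u} → SStr L U,
    (∀ X X' α, (∀ β ≤ α, X β = X' β) → σ X α = σ X' α) ∧
    ∀ (X : Ordinal.{u} → Set U) (α : Ordinal.{u}), α < δ →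
      (∀ β ≤ α, X β ⊆ M.s ∧ #(X β) ≤ lam) →
      (σ X α).Sub M ∧ X α ⊆ (σ X α).s ∧ #(σ X α).s = lam ∧ σ X α ∈ K ∧
        ∀ β < α, le (σ X β) (σ X α)



















-- BEGIN AUX
universe v

set_option maxHeartbeats 1000000

section Aux

variable {L : FirstOrder.Language.{u, u}} {U : Type u}

lemma aux_structure_ext {s : Set U} (t₁ t₂ : L.Structure s)
    (hf : ∀ (n : ℕ) (f : L.Functions n) (x : Fin n → s),
      ((@Structure.funMap L s t₁ n f x : s) : U) = ((@Structure.funMap L s t₂ n f x : s) : U))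
    (hr : ∀ (n : ℕ) (r : L.Relations n) (x : Fin n → s),
      @Structure.RelMap L s t₁ n r x ↔ @Structure.RelMap L s t₂ n r x) :
    t₁ = t₂ := by
  cases t₁ with | mk f₁ r₁ =>
  cases t₂ with | mk f₂ r₂ =>
  have hf' : @f₁ = @f₂ := funext fun n => funext fun f => funext fun x => Subtype.ext (hf n f x)
  have hr' : @r₁ = @r₂ := funext fun n => funext fun r => funext fun x => propext (hr n r x)
  cases hf'; cases hr'; rfl

lemma aux_eq_of_sub_of_s_eq {A B : SStr L U} (hsub : A.Sub B) (hs : A.s = B.s) : A = B := by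
  obtain ⟨sA, tA⟩ := A
  obtain ⟨sB, tB⟩ := B
  obtain rfl : sA = sB := hs
  obtain ⟨h, hf, hr⟩ := hsub
  have : tA = tB := by
    apply aux_structure_ext
    · intro n f x
      have := hf n f x
      rwa [show (fun i => Set.inclusion h (x i)) = x from funext fun i => Subtype.ext rfl] at this
    · intro n r x
      have := hr n r x
      rwa [show (fun i => Set.inclusion h (x i)) = x from funext fun i => Subtype.ext rfl] at this
  rw [this]

lemma aux_sub_of_sub_of_subset {A B M : SStr L U} (hA : A.Sub M) (hB : B.Sub M)
    (h : A.s ⊆ B.s) : A.Sub B := by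
  obtain ⟨hAM, fA, rA⟩ := hA
  obtain ⟨hBM, fB, rB⟩ := hB
  refine ⟨h, fun n f x => ?_, fun n r x => ?_⟩
  · have e1 := fA n f x
    have e2 := fB n f (fun i => Set.inclusion h (x i))
    rw [show (fun i => Set.inclusion hBM (Set.inclusion h (x i))) = fun i => Set.inclusion hAM (x i)
      from funext fun i => Subtype.ext rfl] at e2
    rw [e1, ← e2]
  · have e1 := rA n r x
    have e2 := rB n r (fun i => Set.inclusion h (x i))
    rw [show (fun i => Set.inclusion hBM (Set.inclusion h (x i))) = fun i => Set.inclusion hAM (x i)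
      from funext fun i => Subtype.ext rfl] at e2
    exact e1.trans e2.symm

lemma aux_exists_index {ι : Sort v} [Nonempty ι] {D : ι → Set U}
    (hdir : ∀ i j, ∃ k, D i ⊆ D k ∧ D j ⊆ D k) :
    ∀ l : List U, (∀ a ∈ l, a ∈ ⋃ i, D i) → ∃ k, ∀ a ∈ l, a ∈ D k := by
  intro l
  induction l with
  | nil => exact fun _ => ⟨Classical.arbitrary ι, by simp⟩
  | cons a t ih =>
    intro h
    obtain ⟨i, hi⟩ := ih (fun b hb => h b (List.mem_cons_of_mem _ hb))
    obtain ⟨j, hj⟩ := Set.mem_iUnion.mp (h a (List.mem_cons_self))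
    obtain ⟨k, h1, h2⟩ := hdir j i
    refine ⟨k, fun b hb => ?_⟩
    rcases List.mem_cons.mp hb with rfl | hb
    · exact h1 hj
    · exact h2 (hi b hb)

lemma aux_sub_of_forall_sub {ι : Sort v} [Nonempty ι] {P : ι → SStr L U} {Q M : SStr L U}
    (hQs : Q.s = ⋃ i, (P i).s) (hsubQ : ∀ i, (P i).Sub Q) (hsubM : ∀ i, (P i).Sub M)
    (hdir : ∀ i j, ∃ k, (P i).s ⊆ (P k).s ∧ (P j).s ⊆ (P k).s) : Q.Sub M := by
  have hQM : Q.s ⊆ M.s := by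
    rw [hQs]; exact Set.iUnion_subset fun i => (hsubM i).choose
  have key : ∀ (n : ℕ) (x : Fin n → Q.s), ∃ k, ∀ i, (x i : U) ∈ (P k).s := by
    intro n x
    obtain ⟨k, hk⟩ := aux_exists_index hdir (List.ofFn fun i => ((x i : U)))
      (fun a ha => by
        obtain ⟨i, rfl⟩ := List.mem_ofFn.mp ha
        exact hQs ▸ (x i).2)
    exact ⟨k, fun i => hk _ (List.mem_ofFn.mpr ⟨i, rfl⟩)⟩
  refine ⟨hQM, fun n f x => ?_, fun n r x => ?_⟩
  · obtain ⟨k, hk⟩ := key n x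
    obtain ⟨h1, ff, -⟩ := hsubQ k
    obtain ⟨h2, gg, -⟩ := hsubM k
    have e1 := ff n f (fun i => ⟨x i, hk i⟩)
    have e2 := gg n f (fun i => ⟨x i, hk i⟩)
    rw [show (fun i => Set.inclusion h1 (⟨x i, hk i⟩ : (P k).s)) = x
      from funext fun i => Subtype.ext rfl] at e1
    rw [show (fun i => Set.inclusion h2 (⟨x i, hk i⟩ : (P k).s))
        = fun i => Set.inclusion hQM (x i) from funext fun i => Subtype.ext rfl] at e2
    rw [← e1, e2]
  · obtain ⟨k, hk⟩ := key n x
    obtain ⟨h1, -, rQ⟩ := hsubQ k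
    obtain ⟨h2, -, rM⟩ := hsubM k
    have e1 := rQ n r (fun i => ⟨x i, hk i⟩)
    have e2 := rM n r (fun i => ⟨x i, hk i⟩)
    rw [show (fun i => Set.inclusion h1 (⟨x i, hk i⟩ : (P k).s)) = x
      from funext fun i => Subtype.ext rfl] at e1
    rw [show (fun i => Set.inclusion h2 (⟨x i, hk i⟩ : (P k).s))
        = fun i => Set.inclusion hQM (x i) from funext fun i => Subtype.ext rfl] at e2
    exact e1.symm.trans e2

lemma aux_mk_iUnion_le_of_countable {lam : Cardinal.{u}} {ι : Type v} [Countable ι]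
    (f : ι → Set U) (hf : ∀ i, #(f i) ≤ lam) (hlam : ℵ₀ ≤ lam) : #(⋃ i, f i) ≤ lam := by
  rcases isEmpty_or_nonempty ι with h | h
  · rw [Set.iUnion_of_empty]
    simp only [Cardinal.mk_emptyCollection]
    exact zero_le
  · obtain ⟨e, he⟩ := exists_surjective_nat ι
    have e' : Function.Surjective (fun n : ULift.{u} ℕ => e n.down) :=
      he.comp (fun x => ⟨⟨x⟩, rfl⟩)
    rw [← e'.iUnion_comp (fun i => f i)]
    calc #(⋃ n : ULift.{u} ℕ, f (e n.down))
        ≤ #(ULift.{u} ℕ) * ⨆ n : ULift.{u} ℕ, #(f (e n.down)) := Cardinal.mk_iUnion_le _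
      _ ≤ ℵ₀ * lam := by
          apply mul_le_mul'
          · rw [Cardinal.mk_uLift, Cardinal.mk_nat, Cardinal.lift_aleph0]
          · exact ciSup_le' fun n => hf _
      _ = lam := by rw [Cardinal.mul_eq_max le_rfl hlam, max_eq_right hlam]

section WithAEC

variable {K : Set (SStr L U)} {le : SStr L U → SStr L U → Prop} {lam : Cardinal.{u}}

lemma aux_chain_union_spec (hK : IsAEC L U K le lam) (ι : Type u) [LinearOrder ι]
    [IsWellOrder ι (· < ·)] [Nonempty ι] (P : ι → SStr L U) (M : SStr L U)
    (hmono : ∀ i j, i < j → le (P i) (P j)) (hmem : ∀ i, P i ∈ K)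
    (hsubM : ∀ i, (P i).Sub M) :
    ∃ Q : SStr L U, Q.s = (⋃ i, (P i).s) ∧ Q ∈ K ∧ (∀ i, le (P i) Q) ∧
      (∀ W, (∀ i, le (P i) W) → le Q W) ∧ Q.Sub M := by
  obtain ⟨Q, hs, hk, hle, hub⟩ := hK.chain ι P hmono hmem
  have hsubset : ∀ i j : ι, i ≤ j → (P i).s ⊆ (P j).s := by
    intro i j hij
    rcases lt_or_eq_of_le hij with h | rfl
    · exact (hK.sub_of_le (hmono i j h)).choose
    · exact subset_rfl
  refine ⟨Q, hs, hk, hle, hub, ?_⟩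
  exact aux_sub_of_forall_sub hs (fun i => hK.sub_of_le (hle i)) hsubM
    (fun i j => ⟨max i j, hsubset _ _ (le_max_left i j), hsubset _ _ (le_max_right i j)⟩)

lemma aux_directed_union (hK : IsAEC L U K le lam) (M : SStr L U) :
    ∀ κ : Cardinal.{u}, ∀ (ι : Type u), Nonempty ι → ∀ (P : ι → SStr L U), #ι ≤ κ →
      (∀ i, P i ∈ K) → (∀ i, (P i).Sub M) →
      (∀ i j, ∃ k, le (P i) (P k) ∧ le (P j) (P k)) →
      ∃ Q : SStr L U, Q.s = (⋃ i, (P i).s) ∧ Q ∈ K ∧ (∀ i, le (P i) Q) ∧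
        (∀ W, (∀ i, le (P i) W) → le Q W) ∧ Q.Sub M := by
  refine Cardinal.lt_wf.fix ?_
  intro κ IH ι hne P hcard hmem hsubM hdir
  haveI := hne
  choose w hw1 hw2 using hdir
  by_cases hcnt : #ι ≤ ℵ₀
  · -- countable case
    haveI : Countable ι := Cardinal.mk_le_aleph0_iff.mp hcnt
    obtain ⟨e, he⟩ := exists_surjective_nat ι
    let c : ℕ → ι := fun n => Nat.rec (e 0) (fun m cm => w cm (e (m + 1))) n
    have hc0 : c 0 = e 0 := rfl
    have hcs : ∀ n, c (n + 1) = w (c n) (e (n + 1)) := fun n => rfl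
    have hstep : ∀ n, le (P (c n)) (P (c (n + 1))) := fun n => by rw [hcs]; exact hw1 _ _
    have hchain : ∀ m n : ℕ, m < n → le (P (c m)) (P (c n)) := by
      intro m n h
      induction n with
      | zero => omega
      | succ n ih =>
        rcases Nat.lt_succ_iff_lt_or_eq.mp h with h' | rfl
        · exact hK.le_trans (ih h') (hstep n)
        · exact hstep m
    have hce : ∀ m, le (P (e m)) (P (c m)) := by
      intro m
      cases m with
      | zero => exact hK.le_refl _ (hmem _)
      | succ m => rw [hcs]; exact hw2 _ _
    haveI : WellFoundedLT (ULift.{u} ℕ) :=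
      ⟨InvImage.wf (fun x : ULift.{u} ℕ => x.down) (Nat.lt_wfRel.wf)⟩
    haveI : IsWellOrder (ULift.{u} ℕ) (· < ·) := isWellOrder_lt
    haveI : Nonempty (ULift.{u} ℕ) := ⟨⟨0⟩⟩
    obtain ⟨Q, hQs, hQmem, hQle, hQub, hQsub⟩ := aux_chain_union_spec hK (ULift.{u} ℕ)
      (fun n => P (c n.down)) M (fun i j hij => hchain i.down j.down hij) (fun n => hmem _)
      (fun n => hsubM _)
    have hsurj : ∀ i : ι, ∃ m : ℕ, e m = i := he
    refine ⟨Q, ?_, hQmem, ?_, ?_, hQsub⟩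
    · rw [hQs]
      apply subset_antisymm
      · exact Set.iUnion_subset fun n => Set.subset_iUnion (fun i => (P i).s) (c n.down)
      · apply Set.iUnion_subset
        intro i
        obtain ⟨m, rfl⟩ := hsurj i
        exact ((hK.sub_of_le (hce m)).choose).trans
          (Set.subset_iUnion (fun n : ULift.{u} ℕ => (P (c n.down)).s) ⟨m⟩)
    · intro i
      obtain ⟨m, rfl⟩ := hsurj i
      exact hK.le_trans (hce m) (hQle ⟨m⟩)
    · intro W hW
      exact hQub W fun n => hW (c n.down)
  · -- uncountable case
    push_neg at hcnt
    set κι := #ι with hκι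
    have hκικ : κι ≤ κ := hcard
    -- enumeration of ι by κι.ord.ToType
    have hzeta : #(κι.ord.ToType) = #ι := by rw [Cardinal.mk_ord_toType]
    obtain ⟨e⟩ := Cardinal.eq.mp hzeta
    haveI : Nonempty (κι.ord.ToType) := ⟨e.symm (Classical.arbitrary ι)⟩
    -- closure machinery
    let F : ℕ → Set ι → Set ι := fun n A =>
      Nat.rec A (fun _ B => B ∪ Set.image2 w B B) n
    let C : (κι.ord.ToType) → Set ι := fun i => ⋃ n : ℕ, F n (insert (e i) (e '' {j : (κι.ord.ToType) | j < i}))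
    have hF0 : ∀ A, F 0 A = A := fun A => rfl
    have hFs : ∀ n A, F (n + 1) A = F n A ∪ Set.image2 w (F n A) (F n A) := fun n A => rfl
    have hFmono : ∀ A (m n : ℕ), m ≤ n → F m A ⊆ F n A := by
      intro A m n h
      induction h with
      | refl => exact subset_rfl
      | step h ih =>
        rename_i n' _
        exact ih.trans (by rw [hFs]; exact Set.subset_union_left)
    have hCbase : ∀ i : (κι.ord.ToType), insert (e i) (e '' {j : (κι.ord.ToType) | j < i}) ⊆ C i :=
      fun i x hx => Set.mem_iUnion.mpr ⟨0, hx⟩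
    have hCclosed : ∀ (i : (κι.ord.ToType)) (x y : ι), x ∈ C i → y ∈ C i → w x y ∈ C i := by
      intro i x y hx hy
      obtain ⟨sx, ⟨n, rfl⟩, hx⟩ := hx
      obtain ⟨sy, ⟨m, rfl⟩, hy⟩ := hy
      refine Set.mem_iUnion.mpr ⟨max n m + 1, ?_⟩
      rw [hFs]
      exact Set.mem_union_right _
        (Set.mem_image2_of_mem (hFmono _ _ _ (le_max_left n m) hx)
          (hFmono _ _ _ (le_max_right n m) hy))
    have hCmono : ∀ i j : (κι.ord.ToType), i < j → C i ⊆ C j := by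
      intro i j hij
      have hbase : insert (e i) (e '' {k : (κι.ord.ToType) | k < i}) ⊆ insert (e j) (e '' {k : (κι.ord.ToType) | k < j}) := by
        intro x hx
        rcases Set.mem_insert_iff.mp hx with rfl | hx
        · exact Set.mem_insert_iff.mpr (Or.inr ⟨i, hij, rfl⟩)
        · obtain ⟨k, hk, rfl⟩ := hx
          exact Set.mem_insert_iff.mpr (Or.inr ⟨k, hk.trans hij, rfl⟩)
      have : ∀ n A B, A ⊆ B → F n A ⊆ F n B := by
        intro n
        induction n with
        | zero => intro A B h; exact h
        | succ n ih =>
          intro A B h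
          rw [hFs, hFs]
          exact Set.union_subset_union (ih A B h)
            (Set.image2_subset (ih A B h) (ih A B h))
      exact Set.iUnion_subset fun n => (this n _ _ hbase).trans (Set.subset_iUnion _ n)
    have hCcard : ∀ i : (κι.ord.ToType), #(C i) < κι := by
      intro i
      have hIio : #({j : (κι.ord.ToType) | j < i}) < κι := Cardinal.mk_Iio_ord_toType i
      have hbase : #(insert (e i) (e '' {j : (κι.ord.ToType) | j < i}) : Set ι) < κι := by
        refine lt_of_le_of_lt Cardinal.mk_insert_le ?_
        have h1 : #(e '' {j : (κι.ord.ToType) | j < i} : Set ι) < κι :=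
          lt_of_le_of_lt Cardinal.mk_image_le hIio
        exact Cardinal.add_lt_of_lt hcnt.le h1 (lt_of_le_of_lt Cardinal.one_lt_aleph0.le hcnt)
      set B := insert (e i) (e '' {j : (κι.ord.ToType) | j < i}) with hB
      set a := #(B : Set ι) + ℵ₀ with ha
      have haleph : ℵ₀ ≤ a := le_add_self
      have haκ : a < κι := Cardinal.add_lt_of_lt hcnt.le hbase hcnt
      have hFcard : ∀ n, #↥(F n B) ≤ a := by
        intro n
        induction n with
        | zero => exact self_le_add_right _ _
        | succ n ih =>
          rw [hFs]
          refine (Cardinal.mk_union_le _ _).trans ?_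
          have himg : #↥(Set.image2 w (F n B) (F n B)) ≤ a := by
            refine (Cardinal.mk_image2_le).trans ?_
            calc #↥(F n B) * #↥(F n B) ≤ a * a := mul_le_mul' ih ih
              _ = a := Cardinal.mul_eq_self haleph
          calc #↥(F n B) + #↥(Set.image2 w (F n B) (F n B)) ≤ a + a :=
                add_le_add ih himg
            _ = a := Cardinal.add_eq_self haleph
      calc #(C i) ≤ a := aux_mk_iUnion_le_of_countable _ hFcard haleph
        _ < κι := haκ
    -- apply IH on each C i
    have hCne : ∀ i : (κι.ord.ToType), Nonempty (C i) := fun i => ⟨⟨e i, hCbase i (Set.mem_insert _ _)⟩⟩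
    have hIH : ∀ i : (κι.ord.ToType), ∃ Q : SStr L U, Q.s = (⋃ x : C i, (P x.1).s) ∧ Q ∈ K ∧
        (∀ x : C i, le (P x.1) Q) ∧ (∀ W, (∀ x : C i, le (P x.1) W) → le Q W) ∧ Q.Sub M := by
      intro i
      exact IH (#(C i)) (lt_of_lt_of_le (hCcard i) hκικ) (C i) (hCne i)
        (fun x => P x.1) le_rfl (fun x => hmem _) (fun x => hsubM _)
        (fun x y => ⟨⟨w x.1 y.1, hCclosed i _ _ x.2 y.2⟩, hw1 _ _, hw2 _ _⟩)
    choose Qf hQf1 hQf2 hQf3 hQf4 hQf5 using hIH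
    have hQchain : ∀ i j : (κι.ord.ToType), i < j → le (Qf i) (Qf j) := by
      intro i j hij
      exact hQf4 i (Qf j) fun x => hQf3 j ⟨x.1, hCmono i j hij x.2⟩
    haveI : IsWellOrder (κι.ord.ToType) (· < ·) := isWellOrder_lt
    obtain ⟨Q, hQs, hQmem, hQle, hQub, hQsub⟩ := aux_chain_union_spec hK (κι.ord.ToType) Qf M
      hQchain hQf2 hQf5
    refine ⟨Q, ?_, hQmem, ?_, ?_, ?_⟩
    · rw [hQs]
      apply subset_antisymm
      · apply Set.iUnion_subset
        intro i
        rw [hQf1 i]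
        exact Set.iUnion_subset fun x => Set.subset_iUnion (fun i => (P i).s) x.1
      · apply Set.iUnion_subset
        intro i
        have hmem' : i ∈ C (e.symm i) := by
          have := hCbase (e.symm i) (Set.mem_insert _ _)
          rwa [e.apply_symm_apply] at this
        refine subset_trans ?_ (Set.subset_iUnion (fun j : (κι.ord.ToType) => (Qf j).s) (e.symm i))
        rw [hQf1]
        exact Set.subset_iUnion (fun x : C (e.symm i) => (P x.1).s) ⟨i, hmem'⟩
    · intro i
      have hmem' : i ∈ C (e.symm i) := by
        have := hCbase (e.symm i) (Set.mem_insert _ _)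
        rwa [e.apply_symm_apply] at this
      exact hK.le_trans (hQf3 (e.symm i) ⟨i, hmem'⟩) (hQle (e.symm i))
    · intro W hW
      exact hQub W fun i => hQf4 i W fun x => hW x.1
    · exact hQsub

end WithAEC

end Aux

section Forward

variable {L : FirstOrder.Language.{u, u}} {U : Type u}

noncomputable def fwdStrat (le' : SStr L U → SStr L U → Prop) (lam : Cardinal.{u})
    (M : SStr L U) (X : Ordinal.{u} → Set U) : Ordinal.{u} → SStr L U :=
  WellFounded.fix Ordinal.lt_wf fun α ih =>
    @Classical.epsilon _ ⟨M⟩ fun N : SStr L U =>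
      le' N M ∧ (X α ∪ ⋃ β : Set.Iio α, (ih β.1 β.2).s) ⊆ N.s ∧ #N.s = lam

lemma fwdStrat_eq (le' : SStr L U → SStr L U → Prop) (lam : Cardinal.{u}) (M : SStr L U)
    (X : Ordinal.{u} → Set U) (α : Ordinal.{u}) :
    fwdStrat le' lam M X α = @Classical.epsilon _ ⟨M⟩ (fun N : SStr L U =>
      le' N M ∧ (X α ∪ ⋃ β : Set.Iio α, (fwdStrat le' lam M X β.1).s) ⊆ N.s ∧ #N.s = lam) := by
  unfold fwdStrat
  exact WellFounded.fix_eq _ _ _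

lemma fwdStrat_coh (le' : SStr L U → SStr L U → Prop) (lam : Cardinal.{u}) (M : SStr L U) :
    ∀ (α : Ordinal.{u}) (X X' : Ordinal.{u} → Set U), (∀ β ≤ α, X β = X' β) →
      fwdStrat le' lam M X α = fwdStrat le' lam M X' α := by
  intro α
  induction α using Ordinal.induction with
  | h α IH =>
    intro X X' hXX
    rw [fwdStrat_eq, fwdStrat_eq]
    have e1 : X α = X' α := hXX α le_rfl
    have e2 : (⋃ β : Set.Iio α, (fwdStrat le' lam M X β.1).s)
        = ⋃ β : Set.Iio α, (fwdStrat le' lam M X' β.1).s :=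
      Set.iUnion_congr fun β => by
        rw [IH β.1 β.2 X X' (fun γ hγ => hXX γ (hγ.trans β.2.le))]
    rw [e1, e2]

lemma fwdStrat_win {K : Set (SStr L U)} {le : SStr L U → SStr L U → Prop} {lam : Cardinal.{u}}
    (hK : IsAEC L U K le lam) {M : SStr L U} (hM : M ∈ K) :
    ∀ α : Ordinal.{u}, α < Ordinal.omega0 * Ordinal.omega0 →
      ∀ X : Ordinal.{u} → Set U, (∀ β ≤ α, X β ⊆ M.s ∧ #(X β) ≤ lam) →
      le (fwdStrat le lam M X α) M ∧ X α ⊆ (fwdStrat le lam M X α).s ∧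
      #(fwdStrat le lam M X α).s = lam ∧
      (∀ β < α, le (fwdStrat le lam M X β) (fwdStrat le lam M X α)) := by
  intro α
  induction α using Ordinal.induction with
  | h α IH =>
    intro hα X hX
    have hIH : ∀ β : Ordinal.{u}, β < α →
        le (fwdStrat le lam M X β) M ∧ X β ⊆ (fwdStrat le lam M X β).s ∧
        #(fwdStrat le lam M X β).s = lam ∧
        (∀ γ < β, le (fwdStrat le lam M X γ) (fwdStrat le lam M X β)) :=
      fun β hβ => IH β hβ (hβ.trans hα) X (fun γ hγ => hX γ (hγ.trans hβ.le))
    have hAM : (X α ∪ ⋃ β : Set.Iio α, (fwdStrat le lam M X β.1).s) ⊆ M.s := by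
      apply Set.union_subset (hX α le_rfl).1
      exact Set.iUnion_subset fun β => (hK.sub_of_le (hIH β.1 β.2).1).choose
    have hcount : Countable (Set.Iio α) := by
      have h1 : α.card ≤ ℵ₀ := by
        have h2 := Ordinal.card_le_card hα.le
        rwa [Ordinal.card_mul, Ordinal.card_omega0, Cardinal.mul_eq_self le_rfl] at h2
      rw [← Cardinal.mk_le_aleph0_iff (α := ↥(Set.Iio α))]
      rw [Ordinal.mk_Iio_ordinal]
      calc Cardinal.lift.{u+1} α.card ≤ Cardinal.lift.{u+1} ℵ₀ := Cardinal.lift_le.mpr h1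
        _ = ℵ₀ := Cardinal.lift_aleph0
    have hcard : #(X α ∪ ⋃ β : Set.Iio α, (fwdStrat le lam M X β.1).s : Set U) ≤ lam := by
      refine (Cardinal.mk_union_le _ _).trans ?_
      have h2 : #(⋃ β : Set.Iio α, (fwdStrat le lam M X β.1).s) ≤ lam :=
        aux_mk_iUnion_le_of_countable _ (fun β => le_of_eq (hIH β.1 β.2).2.2.1)
          hK.lam_infinite
      calc #(X α) + #(⋃ β : Set.Iio α, (fwdStrat le lam M X β.1).s)
          ≤ lam + lam := add_le_add (hX α le_rfl).2 h2
        _ = lam := Cardinal.add_eq_self hK.lam_infinite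
    obtain ⟨N, hN1, hN2, hN3⟩ := hK.loewenheim_skolem M hM _ hAM
    have hNcard : #N.s = lam := by
      apply le_antisymm
      · refine hN3.trans ?_
        calc lam + #(X α ∪ ⋃ β : Set.Iio α, (fwdStrat le lam M X β.1).s : Set U)
            ≤ lam + lam := add_le_add_right hcard lam
          _ = lam := Cardinal.add_eq_self hK.lam_infinite
      · exact hK.card_mem N (hK.mem_of_le hN1).1
    have hex : ∃ N' : SStr L U, le N' M ∧
        (X α ∪ ⋃ β : Set.Iio α, (fwdStrat le lam M X β.1).s) ⊆ N'.s ∧ #N'.s = lam :=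
      ⟨N, hN1, hN2, hNcard⟩
    have hsp := Classical.epsilon_spec hex
    rw [← fwdStrat_eq le lam M X α] at hsp
    obtain ⟨hle', hsub', hcard'⟩ := hsp
    refine ⟨hle', (Set.subset_union_left).trans hsub', hcard', ?_⟩
    intro β hβ
    have hsubβ : (fwdStrat le lam M X β).s ⊆ (fwdStrat le lam M X α).s := by
      refine subset_trans ?_ hsub'
      exact subset_trans
        (Set.subset_iUnion (fun γ : Set.Iio α => (fwdStrat le lam M X γ.1).s) ⟨β, hβ⟩)
        Set.subset_union_right
    exact hK.coherence (hIH β hβ).1 hle'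
      (aux_sub_of_sub_of_subset (hK.sub_of_le (hIH β hβ).1) (hK.sub_of_le hle') hsubβ)

end Forward

section BackwardDefs

variable {L : FirstOrder.Language.{u, u}} {U : Type u}

/-- The transfinite play associated to an `ω`-sequence of moves. -/
def toPlay (g : ℕ → Set U) : Ordinal.{u} → Set U :=
  fun β => {x | ∃ n : ℕ, ((n : ℕ) : Ordinal.{u}) = β ∧ x ∈ g n}

lemma toPlay_nat (g : ℕ → Set U) (n : ℕ) : toPlay g ((n : ℕ) : Ordinal.{u}) = g n := by
  ext x
  constructor
  · rintro ⟨m, hm, hx⟩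
    have : m = n := by exact_mod_cast hm
    subst this; exact hx
  · intro hx
    exact ⟨n, rfl, hx⟩

lemma toPlay_not_nat (g : ℕ → Set U) {β : Ordinal.{u}}
    (h : ∀ n : ℕ, ((n : ℕ) : Ordinal.{u}) ≠ β) : toPlay g β = ∅ := by
  ext x
  simp only [Set.mem_empty_iff_false, iff_false]
  rintro ⟨n, hn, -⟩
  exact h n hn

lemma toPlay_agree {g g' : ℕ → Set U} {n : ℕ} (h : ∀ m ≤ n, g m = g' m) :
    ∀ β ≤ ((n : ℕ) : Ordinal.{u}), toPlay g β = toPlay g' β := by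
  intro β hβ
  by_cases hb : ∃ m : ℕ, ((m : ℕ) : Ordinal.{u}) = β
  · obtain ⟨m, rfl⟩ := hb
    rw [toPlay_nat, toPlay_nat, h m (by exact_mod_cast hβ)]
  · push_neg at hb
    rw [toPlay_not_nat g hb, toPlay_not_nat g' hb]

variable (σ : (Ordinal.{u} → Set U) → Ordinal.{u} → SStr L U)

/-- Player II's response, at a finite round, to the play induced by `g`. -/
def resp (g : ℕ → Set U) (n : ℕ) : SStr L U := σ (toPlay g) ((n : ℕ) : Ordinal.{u})

/-- The union of all of Player II's responses along the play `g`. -/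
def Ug (g : ℕ → Set U) : Set U := ⋃ n : ℕ, (resp σ g n).s

/-- The auxiliary plays used in the closure construction. -/
def playOf (g₁ g₂ : ℕ → Set U) (S : ℕ → Set U) (k : ℕ) (w : Option (Bool × ℕ)) :
    ℕ → Set U := fun j =>
  match w with
  | some (b, m) => if j ≤ m then (if b = true then g₁ j else g₂ j) else S (min (j - (m + 1)) k)
  | none => S (min j k)

def roundOf (k : ℕ) (w : Option (Bool × ℕ)) : ℕ :=
  match w with
  | some (_, m) => m + 1 + k
  | none => k

def sfun (g₁ g₂ : ℕ → Set U) : ℕ → ℕ → Set U := fun k =>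
  Nat.rec (motive := fun _ => ℕ → Set U)
    (fun _ => Ug σ g₁ ∪ Ug σ g₂)
    (fun k G n => if n ≤ k then G n else
      G k ∪ ⋃ w : Option (Bool × ℕ), (resp σ (playOf g₁ g₂ G k w) (roundOf k w)).s) k

/-- The canonical increasing sequence of subsets closing off `g₁` and `g₂` under the
strategy. -/
def SP (g₁ g₂ : ℕ → Set U) (k : ℕ) : Set U := sfun σ g₁ g₂ k k

lemma sfun_succ (g₁ g₂ : ℕ → Set U) (k n : ℕ) :
    sfun σ g₁ g₂ (k + 1) n = if n ≤ k then sfun σ g₁ g₂ k n else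
      sfun σ g₁ g₂ k k ∪ ⋃ w : Option (Bool × ℕ),
        (resp σ (playOf g₁ g₂ (sfun σ g₁ g₂ k) k w) (roundOf k w)).s := rfl

lemma sfun_diag (g₁ g₂ : ℕ → Set U) : ∀ k n, n ≤ k → sfun σ g₁ g₂ k n = SP σ g₁ g₂ n := by
  intro k
  induction k with
  | zero =>
    intro n hn
    obtain rfl := Nat.le_zero.mp hn
    rfl
  | succ k ih =>
    intro n hn
    by_cases h : n ≤ k
    · rw [sfun_succ, if_pos h]
      exact ih n h
    · have : n = k + 1 := by omega
      subst this
      rfl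

lemma SP_succ (g₁ g₂ : ℕ → Set U) (k : ℕ) :
    SP σ g₁ g₂ (k + 1) = SP σ g₁ g₂ k ∪ ⋃ w : Option (Bool × ℕ),
      (resp σ (playOf g₁ g₂ (SP σ g₁ g₂) k w) (roundOf k w)).s := by
  have h1 : SP σ g₁ g₂ (k + 1) = sfun σ g₁ g₂ k k ∪ ⋃ w : Option (Bool × ℕ),
      (resp σ (playOf g₁ g₂ (sfun σ g₁ g₂ k) k w) (roundOf k w)).s := by
    show sfun σ g₁ g₂ (k + 1) (k + 1) = _
    rw [sfun_succ, if_neg (by omega)]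
  rw [h1]
  have h2 : playOf g₁ g₂ (sfun σ g₁ g₂ k) k = playOf g₁ g₂ (SP σ g₁ g₂) k := by
    funext w j
    rcases w with _ | ⟨b, m⟩
    · exact sfun_diag σ g₁ g₂ k (min j k) (min_le_right _ _)
    · show (if j ≤ m then (if b = true then g₁ j else g₂ j)
          else sfun σ g₁ g₂ k (min (j - (m + 1)) k))
        = (if j ≤ m then (if b = true then g₁ j else g₂ j)
          else SP σ g₁ g₂ (min (j - (m + 1)) k))
      by_cases hj : j ≤ m
      · rw [if_pos hj, if_pos hj]
      · rw [if_neg hj, if_neg hj]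
        exact sfun_diag σ g₁ g₂ k _ (min_le_right _ _)
  rw [h2]
  rfl

end BackwardDefs

-- END AUX

/-- Main Theorem 3.8 of the paper, game form.  For an AEC `K` with
`lam = LS(K)`: an `L`-structure `M` belongs to `K` if and only if Player II has a
winning strategy in the decomposition game of length `ω · ω` on `M`. -/
theorem mem_iff_winsII (L : FirstOrder.Language.{u, u}) (U : Type u)
    (K : Set (SStr L U)) (le : SStr L U → SStr L U → Prop) (lam : Cardinal.{u})
    (hK : IsAEC L U K le lam) (M : SStr L U) :
    M ∈ K ↔ WinsII K le lam M (Ordinal.omega0 * Ordinal.omega0) := by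
  constructor
  · -- forward direction: a member of K admits a winning strategy
    intro hM
    refine ⟨fwdStrat le lam M, fun X X' α h => fwdStrat_coh le lam M α X X' h, ?_⟩
    intro X α hα hleg
    obtain ⟨h1, h2, h3, h4⟩ := fwdStrat_win hK hM α hα X hleg
    exact ⟨hK.sub_of_le h1, h2, h3, (hK.mem_of_le h1).1, h4⟩
  · -- backward direction
    rintro ⟨σ, hcoh, hwin⟩
    have hnatlt : ∀ n : ℕ, ((n : ℕ) : Ordinal.{u}) < Ordinal.omega0 * Ordinal.omega0 := by
      intro n
      refine lt_of_lt_of_le (Ordinal.nat_lt_omega0 n) ?_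
      calc Ordinal.omega0 = Ordinal.omega0 * 1 := (mul_one _).symm
        _ ≤ Ordinal.omega0 * Ordinal.omega0 :=
            mul_le_mul_right (Order.one_le_iff_pos.mpr Ordinal.omega0_pos) _
    have hlegal : ∀ g : ℕ → Set U, (∀ n, g n ⊆ M.s ∧ #(g n) ≤ lam) →
        ∀ β : Ordinal.{u}, toPlay g β ⊆ M.s ∧ #(toPlay g β) ≤ lam := by
      intro g hg β
      by_cases h : ∃ n : ℕ, ((n : ℕ) : Ordinal.{u}) = β
      · obtain ⟨n, rfl⟩ := h
        rw [toPlay_nat]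
        exact hg n
      · push_neg at h
        rw [toPlay_not_nat g h]
        exact ⟨Set.empty_subset _, by rw [Cardinal.mk_emptyCollection]; exact zero_le⟩
    have hR : ∀ g : ℕ → Set U, (∀ n, g n ⊆ M.s ∧ #(g n) ≤ lam) → ∀ n : ℕ,
        (resp σ g n).Sub M ∧ g n ⊆ (resp σ g n).s ∧ #(resp σ g n).s = lam ∧
        resp σ g n ∈ K ∧ ∀ m : ℕ, m < n → le (resp σ g m) (resp σ g n) := by
      intro g hg n
      obtain ⟨hsub, hcont, hcard, hmem, hch⟩ :=
        hwin (toPlay g) ((n : ℕ) : Ordinal.{u}) (hnatlt n) (fun β _ => hlegal g hg β)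
      refine ⟨hsub, ?_, hcard, hmem, ?_⟩
      · rw [← toPlay_nat g n]
        exact hcont
      · intro m hm
        exact hch ((m : ℕ) : Ordinal.{u}) (by exact_mod_cast hm)
    have hagree : ∀ (p q : ℕ → Set U) (n : ℕ), (∀ m ≤ n, p m = q m) →
        resp σ p n = resp σ q n := by
      intro p q n hpq
      exact hcoh (toPlay p) (toPlay q) _ (fun β hβ => toPlay_agree hpq β hβ)
    -- the canonical model attached to each legal ω-play
    have hQex : ∀ g : {g : ℕ → Set U // ∀ n, g n ⊆ M.s ∧ #(g n) ≤ lam},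
        ∃ Q : SStr L U, Q.s = Ug σ g.1 ∧ Q ∈ K ∧ (∀ n : ℕ, le (resp σ g.1 n) Q) ∧
          (∀ W, (∀ n : ℕ, le (resp σ g.1 n) W) → le Q W) ∧ Q.Sub M := by
      intro g
      haveI : WellFoundedLT (ULift.{u} ℕ) :=
        ⟨InvImage.wf (fun x : ULift.{u} ℕ => x.down) (Nat.lt_wfRel.wf)⟩
      haveI : IsWellOrder (ULift.{u} ℕ) (· < ·) := isWellOrder_lt
      haveI : Nonempty (ULift.{u} ℕ) := ⟨⟨0⟩⟩
      obtain ⟨Q, h1, h2, h3, h4, h5⟩ := aux_chain_union_spec hK (ULift.{u} ℕ)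
        (fun n => resp σ g.1 n.down) M
        (fun i j hij => (hR g.1 g.2 j.down).2.2.2.2 i.down hij)
        (fun n => (hR g.1 g.2 n.down).2.2.2.1) (fun n => (hR g.1 g.2 n.down).1)
      refine ⟨Q, ?_, h2, fun n => h3 ⟨n⟩, fun W hW => h4 W (fun n => hW n.down), h5⟩
      rw [h1]
      exact Function.Surjective.iUnion_comp (f := fun n : ULift.{u} ℕ => n.down)
        (fun x => ⟨⟨x⟩, rfl⟩) (fun n => (resp σ g.1 n).s)
    choose Qg hQ1 hQ2 hQ3 hQ4 hQ5 using hQex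
    -- directedness of the family of canonical models
    have hKey : ∀ gp hp : {g : ℕ → Set U // ∀ n, g n ⊆ M.s ∧ #(g n) ≤ lam},
        ∃ tp, le (Qg gp) (Qg tp) ∧ le (Qg hp) (Qg tp) := by
      rintro ⟨g₁, hg₁⟩ ⟨g₂, hg₂⟩
      have hUgleg : ∀ g (hg : ∀ n : ℕ, g n ⊆ M.s ∧ #(g n) ≤ lam),
          Ug σ g ⊆ M.s ∧ #(Ug σ g) ≤ lam := by
        intro g hg
        constructor
        · exact Set.iUnion_subset fun n => ((hR g hg n).1).choose
        · exact aux_mk_iUnion_le_of_countable _ (fun n => le_of_eq (hR g hg n).2.2.1)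
            hK.lam_infinite
      -- legality of the closure sequence
      have hTleg : ∀ k, ∀ j ≤ k, SP σ g₁ g₂ j ⊆ M.s ∧ #(SP σ g₁ g₂ j) ≤ lam := by
        intro k
        induction k with
        | zero =>
          intro j hj
          obtain rfl := Nat.le_zero.mp hj
          show Ug σ g₁ ∪ Ug σ g₂ ⊆ M.s ∧ #(Ug σ g₁ ∪ Ug σ g₂ : Set U) ≤ lam
          constructor
          · exact Set.union_subset (hUgleg g₁ hg₁).1 (hUgleg g₂ hg₂).1
          · refine (Cardinal.mk_union_le _ _).trans ?_
            calc #(Ug σ g₁) + #(Ug σ g₂) ≤ lam + lam :=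
                  add_le_add (hUgleg g₁ hg₁).2 (hUgleg g₂ hg₂).2
              _ = lam := Cardinal.add_eq_self hK.lam_infinite
        | succ k ih =>
          intro j hj
          by_cases hjk : j ≤ k
          · exact ih j hjk
          · have hj1 : j = k + 1 := by omega
            subst hj1
            have hplayleg : ∀ w : Option (Bool × ℕ), ∀ n : ℕ,
                playOf g₁ g₂ (SP σ g₁ g₂) k w n ⊆ M.s ∧
                #(playOf g₁ g₂ (SP σ g₁ g₂) k w n) ≤ lam := by
              intro w n
              rcases w with _ | ⟨b, m⟩
              · exact ih (min n k) (min_le_right _ _)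
              · have heq : playOf g₁ g₂ (SP σ g₁ g₂) k (some (b, m)) n
                    = if n ≤ m then (if b = true then g₁ n else g₂ n)
                      else SP σ g₁ g₂ (min (n - (m + 1)) k) := rfl
                rw [heq]
                split_ifs with h1 h2
                · exact hg₁ n
                · exact hg₂ n
                · exact ih _ (min_le_right _ _)
            have hrsp : ∀ w : Option (Bool × ℕ),
                (resp σ (playOf g₁ g₂ (SP σ g₁ g₂) k w) (roundOf k w)).s ⊆ M.s ∧
                #(resp σ (playOf g₁ g₂ (SP σ g₁ g₂) k w) (roundOf k w)).s ≤ lam := fun w =>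
              ⟨((hR _ (hplayleg w) (roundOf k w)).1).choose,
                le_of_eq (hR _ (hplayleg w) (roundOf k w)).2.2.1⟩
            rw [SP_succ σ g₁ g₂ k]
            constructor
            · exact Set.union_subset (ih k le_rfl).1 (Set.iUnion_subset fun w => (hrsp w).1)
            · refine (Cardinal.mk_union_le _ _).trans ?_
              have h2 : #(⋃ w : Option (Bool × ℕ),
                  (resp σ (playOf g₁ g₂ (SP σ g₁ g₂) k w) (roundOf k w)).s) ≤ lam :=
                aux_mk_iUnion_le_of_countable _ (fun w => (hrsp w).2) hK.lam_infinite
              calc _ ≤ lam + lam := add_le_add (ih k le_rfl).2 h2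
                _ = lam := Cardinal.add_eq_self hK.lam_infinite
      have hTleg' : ∀ n, SP σ g₁ g₂ n ⊆ M.s ∧ #(SP σ g₁ g₂ n) ≤ lam :=
        fun n => hTleg n n le_rfl
      -- responses to the diagonal play stay inside the closure
      have hTresp_eq : ∀ k, resp σ (SP σ g₁ g₂) k =
          resp σ (playOf g₁ g₂ (SP σ g₁ g₂) k none) k := by
        intro k
        apply hagree
        intro m hm
        show SP σ g₁ g₂ m = SP σ g₁ g₂ (min m k)
        rw [min_eq_left hm]
      have hTrespsub : ∀ k, (resp σ (SP σ g₁ g₂) k).s ⊆ SP σ g₁ g₂ (k + 1) := by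
        intro k
        rw [hTresp_eq k, SP_succ σ g₁ g₂ k]
        exact Set.subset_union_of_subset_right
          (Set.subset_iUnion
            (fun w => (resp σ (playOf g₁ g₂ (SP σ g₁ g₂) k w) (roundOf k w)).s) none) _
      have hTcont : ∀ k, SP σ g₁ g₂ k ⊆ (resp σ (SP σ g₁ g₂) k).s :=
        fun k => (hR (SP σ g₁ g₂) hTleg' k).2.1
      have hUgT : Ug σ (SP σ g₁ g₂) = ⋃ k : ℕ, SP σ g₁ g₂ k := by
        apply subset_antisymm
        · exact Set.iUnion_subset fun k =>
            (hTrespsub k).trans (Set.subset_iUnion (fun k => SP σ g₁ g₂ k) (k + 1))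
        · exact Set.iUnion_subset fun k =>
            (hTcont k).trans (Set.subset_iUnion (fun k => (resp σ (SP σ g₁ g₂) k).s) k)
      -- the mixed plays
      have hpmixleg : ∀ (b : Bool) (m : ℕ), ∀ n : ℕ,
          (fun j => if j ≤ m then (if b = true then g₁ j else g₂ j)
            else SP σ g₁ g₂ (j - (m + 1))) n ⊆ M.s ∧
          #((fun j => if j ≤ m then (if b = true then g₁ j else g₂ j)
            else SP σ g₁ g₂ (j - (m + 1))) n) ≤ lam := by
        intro b m n
        dsimp only
        split_ifs with h1 h2
        · exact hg₁ n
        · exact hg₂ n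
        · exact hTleg' _
      have hmix_early : ∀ (b : Bool) (m j : ℕ), j ≤ m →
          resp σ (fun j => if j ≤ m then (if b = true then g₁ j else g₂ j)
            else SP σ g₁ g₂ (j - (m + 1))) j
          = resp σ (if b = true then g₁ else g₂) j := by
        intro b m j hj
        apply hagree
        intro i hi
        rw [if_pos (hi.trans hj)]
        rcases b with _ | _ <;> rfl
      have hmix_late : ∀ (b : Bool) (m k : ℕ),
          resp σ (fun j => if j ≤ m then (if b = true then g₁ j else g₂ j)
            else SP σ g₁ g₂ (j - (m + 1))) (m + 1 + k)
          = resp σ (playOf g₁ g₂ (SP σ g₁ g₂) k (some (b, m))) (roundOf k (some (b, m))) := by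
        intro b m k
        have hround : roundOf k (some (b, m)) = m + 1 + k := rfl
        rw [hround]
        apply hagree
        intro i hi
        show (if i ≤ m then (if b = true then g₁ i else g₂ i) else SP σ g₁ g₂ (i - (m + 1)))
          = (if i ≤ m then (if b = true then g₁ i else g₂ i)
            else SP σ g₁ g₂ (min (i - (m + 1)) k))
        by_cases him : i ≤ m
        · rw [if_pos him, if_pos him]
        · rw [if_neg him, if_neg him, min_eq_left (by omega)]
      have hmixsub : ∀ (b : Bool) (m k : ℕ),
          (resp σ (fun j => if j ≤ m then (if b = true then g₁ j else g₂ j)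
            else SP σ g₁ g₂ (j - (m + 1))) (m + 1 + k)).s ⊆ SP σ g₁ g₂ (k + 1) := by
        intro b m k
        rw [hmix_late b m k, SP_succ σ g₁ g₂ k]
        exact Set.subset_union_of_subset_right
          (Set.subset_iUnion
            (fun w => (resp σ (playOf g₁ g₂ (SP σ g₁ g₂) k w) (roundOf k w)).s)
            (some (b, m))) _
      have hmixcont : ∀ (b : Bool) (m k : ℕ), SP σ g₁ g₂ k ⊆
          (resp σ (fun j => if j ≤ m then (if b = true then g₁ j else g₂ j)
            else SP σ g₁ g₂ (j - (m + 1))) (m + 1 + k)).s := by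
        intro b m k
        have h := (hR _ (hpmixleg b m) (m + 1 + k)).2.1
        rwa [if_neg (show ¬ (m + 1 + k ≤ m) from by omega),
          show m + 1 + k - (m + 1) = k from by omega] at h
      have hGsub : ∀ (b : Bool) (j : ℕ),
          (resp σ (if b = true then g₁ else g₂) j).s ⊆ SP σ g₁ g₂ 0 := by
        intro b j
        show _ ⊆ Ug σ g₁ ∪ Ug σ g₂
        rcases b with _ | _
        · exact subset_trans (Set.subset_iUnion (fun n => (resp σ g₂ n).s) j)
            Set.subset_union_right
        · exact subset_trans (Set.subset_iUnion (fun n => (resp σ g₁ n).s) j)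
            Set.subset_union_left
      have hUgmix : ∀ (b : Bool) (m : ℕ),
          Ug σ (fun j => if j ≤ m then (if b = true then g₁ j else g₂ j)
            else SP σ g₁ g₂ (j - (m + 1))) = ⋃ k : ℕ, SP σ g₁ g₂ k := by
        intro b m
        apply subset_antisymm
        · apply Set.iUnion_subset
          intro j
          by_cases hj : j ≤ m
          · rw [hmix_early b m j hj]
            exact (hGsub b j).trans (Set.subset_iUnion (fun k => SP σ g₁ g₂ k) 0)
          · rw [show j = m + 1 + (j - (m + 1)) from by omega]
            exact (hmixsub b m _).trans
              (Set.subset_iUnion (fun k => SP σ g₁ g₂ k) (j - (m + 1) + 1))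
        · apply Set.iUnion_subset
          intro k
          exact (hmixcont b m k).trans
            (Set.subset_iUnion
              (fun j => (resp σ (fun j => if j ≤ m then (if b = true then g₁ j else g₂ j)
                else SP σ g₁ g₂ (j - (m + 1))) j).s) (m + 1 + k))
      -- equality of the canonical models
      have hQmixeq : ∀ (b : Bool) (m : ℕ),
          Qg ⟨fun j => if j ≤ m then (if b = true then g₁ j else g₂ j)
            else SP σ g₁ g₂ (j - (m + 1)), hpmixleg b m⟩ = Qg ⟨SP σ g₁ g₂, hTleg'⟩ := by
        intro b m
        have hs : (Qg ⟨fun j => if j ≤ m then (if b = true then g₁ j else g₂ j)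
            else SP σ g₁ g₂ (j - (m + 1)), hpmixleg b m⟩).s
            = (Qg ⟨SP σ g₁ g₂, hTleg'⟩).s := by
          rw [hQ1, hQ1]
          show Ug σ _ = Ug σ _
          rw [hUgmix b m, hUgT]
        exact aux_eq_of_sub_of_s_eq
          (aux_sub_of_sub_of_subset (hQ5 _) (hQ5 _) hs.le) hs
      have hle_resp : ∀ (b : Bool) (m : ℕ),
          le (resp σ (if b = true then g₁ else g₂) m) (Qg ⟨SP σ g₁ g₂, hTleg'⟩) := by
        intro b m
        have h := hQ3 ⟨fun j => if j ≤ m then (if b = true then g₁ j else g₂ j)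
          else SP σ g₁ g₂ (j - (m + 1)), hpmixleg b m⟩ m
        rw [hmix_early b m m le_rfl] at h
        rwa [hQmixeq b m] at h
      refine ⟨⟨SP σ g₁ g₂, hTleg'⟩, ?_, ?_⟩
      · apply hQ4
        intro n
        have h := hle_resp true n
        rwa [if_pos rfl] at h
      · apply hQ4
        intro n
        have h := hle_resp false n
        rwa [if_neg (by decide)] at h
    -- conclude via the directed union lemma
    haveI hne : Nonempty {g : ℕ → Set U // ∀ n, g n ⊆ M.s ∧ #(g n) ≤ lam} :=
      ⟨⟨fun _ => ∅, fun _ =>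
        ⟨Set.empty_subset _, by rw [Cardinal.mk_emptyCollection]; exact zero_le⟩⟩⟩
    obtain ⟨Q, hQs, hQK, hQle, hQub, hQsub⟩ := aux_directed_union hK M
      (#{g : ℕ → Set U // ∀ n, g n ⊆ M.s ∧ #(g n) ≤ lam}) _ hne Qg le_rfl hQ2 hQ5 hKey
    have hQsM : Q.s = M.s := by
      rw [hQs]
      apply subset_antisymm
      · exact Set.iUnion_subset fun g => (hQ5 g).choose
      · intro a ha
        have hg : ∀ n : ℕ, (fun _ : ℕ => ({a} : Set U)) n ⊆ M.s ∧
            #((fun _ : ℕ => ({a} : Set U)) n) ≤ lam := fun n =>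
          ⟨Set.singleton_subset_iff.mpr ha, by
            rw [Cardinal.mk_singleton]
            exact le_trans Cardinal.one_le_aleph0 hK.lam_infinite⟩
        refine Set.mem_iUnion.mpr ⟨⟨fun _ => ({a} : Set U), hg⟩, ?_⟩
        rw [hQ1 ⟨fun _ => ({a} : Set U), hg⟩]
        refine Set.mem_iUnion.mpr ⟨0, ?_⟩
        exact (hR _ hg 0).2.1 rfl
    have hQM : Q = M := aux_eq_of_sub_of_s_eq hQsub hQsM
    rw [← hQM]
    exact hQK


end AECFormalization
end

section
/- Let K be an abstract elementary class in a finitary language L with λ = LS(K), let M ∈ K, and let A ⊆ |M| with |A| = λ. Then the following are equivalent: (1) A is closed under the interpretations in M of the function symbols of L, its induced structure belongs to K, and (as induced structure) A ≤_K M; (2) Player II has a winning strategy in the modified decomposition game G'_{ω·ω}(M,A), which is the decomposition game G_{ω·ω}(M) with the additional requirement in round 0 that the induced structure on A belongs to K and A ≤_K Y₀. -/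
universe u

open FirstOrder FirstOrder.Language Cardinal

namespace AECFormalization

/-- Player II has a winning strategy in the modified decomposition game
`G'_δ(M, A)`: the decomposition game of length `δ` on `M` (see the paper), with the
additional requirement in round `0` that the induced structure on `A` belongs to `K`
and is a strong substructure of Player II's move `Y₀`. -/
def WinsIIFrom (K : Set (SStr L U)) (le : SStr L U → SStr L U → Prop)
    (lam : Cardinal.{u}) (M : SStr L U) (A : Set U) (δ : Ordinal.{u}) : Prop :=
  ∃ σ : (Ordinal.{u} → Set U) → Ordinal.{u} → SStr L U,
    (∀ X X' α, (∀ β ≤ α, X β = X' β) → σ X α = σ X' α) ∧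
    ∀ (X : Ordinal.{u} → Set U) (α : Ordinal.{u}), α < δ →
      (∀ β ≤ α, X β ⊆ M.s ∧ #(X β) ≤ lam) →
      (σ X α).Sub M ∧ X α ⊆ (σ X α).s ∧ #(σ X α).s = lam ∧ σ X α ∈ K ∧
        (∀ β < α, le (σ X β) (σ X α)) ∧
        (α = 0 → ∃ A' : SStr L U, A'.s = A ∧ A'.Sub M ∧ A' ∈ K ∧ le A' (σ X 0))

section Helpers

variable {L : FirstOrder.Language.{u, u}} {U : Type u}

theorem SStr.Sub.subset {M N : SStr L U} (h : M.Sub N) : M.s ⊆ N.s := h.choose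

/-- If `M` and `N` are both literal substructures of `P` and the universe of `M` is
contained in that of `N`, then `M` is a literal substructure of `N`. -/
theorem SStr.sub_of_sub_sub {M N P : SStr L U} (hMP : M.Sub P) (hNP : N.Sub P)
    (h : M.s ⊆ N.s) : M.Sub N := by
  obtain ⟨h1, h2, h3⟩ := hMP
  obtain ⟨g1, g2, g3⟩ := hNP
  refine ⟨h, fun n f x => ?_, fun n r x => ?_⟩
  · have e : (fun i => Set.inclusion g1 (Set.inclusion h (x i)))
        = fun i => Set.inclusion h1 (x i) := funext fun i => Subtype.ext rfl
    rw [h2 n f x, g2 n f (fun i => Set.inclusion h (x i)), e]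
  · have e : (fun i => Set.inclusion g1 (Set.inclusion h (x i)))
        = fun i => Set.inclusion h1 (x i) := funext fun i => Subtype.ext rfl
    rw [h3 n r x, g3 n r (fun i => Set.inclusion h (x i)), e]

/-- Two literal substructures of `P` with the same universe are equal. -/
theorem SStr.eq_of_sub_sub {M N P : SStr L U} (hMP : M.Sub P) (hNP : N.Sub P)
    (h : M.s = N.s) : M = N := by
  obtain ⟨s, strM⟩ := M
  obtain ⟨s', strN⟩ := N
  obtain rfl : s = s' := h
  obtain ⟨h1, h2, h3⟩ := hMP
  obtain ⟨g1, g2, g3⟩ := hNP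
  congr 1
  obtain ⟨fM, rM⟩ := strM
  obtain ⟨fN, rN⟩ := strN
  congr 1
  · funext n f x
    exact Subtype.ext ((h2 n f x).trans (g2 n f x).symm)
  · funext n r x
    exact propext ((h3 n r x).trans (g3 n r x).symm)
/-- The union of an increasing chain of literal substructures of `M`, endowed with a
structure making each member of the chain a literal substructure of it, is itself a
literal substructure of `M`. -/
theorem SStr.sub_union {M YU : SStr L U} {Y : ℕ → SStr L U}
    (hs : YU.s = ⋃ n, (Y n).s)
    (hYU : ∀ n, (Y n).Sub YU) (hYM : ∀ n, (Y n).Sub M)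
    (hmono : ∀ n m : ℕ, n ≤ m → (Y n).s ⊆ (Y m).s) : YU.Sub M := by
  have hsub : YU.s ⊆ M.s := by
    rw [hs]; exact Set.iUnion_subset fun n => (hYM n).subset
  have key : ∀ (k : ℕ) (x : Fin k → YU.s), ∃ (m : ℕ) (x' : Fin k → (Y m).s),
      (∀ i, ((x' i : U)) = (x i : U)) := by
    intro k x
    have hx : ∀ i, ∃ n, ((x i : U)) ∈ (Y n).s := fun i =>
      Set.mem_iUnion.mp (hs.subset (x i).2)
    set m := Finset.univ.sup fun i => (hx i).choose with hm
    refine ⟨m, fun i => ⟨x i, hmono _ m (Finset.le_sup (Finset.mem_univ i)) (hx i).choose_spec⟩,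
      fun i => rfl⟩
  refine ⟨hsub, fun k f x => ?_, fun k r x => ?_⟩
  · obtain ⟨m, x', hx'⟩ := key k x
    obtain ⟨hu, hf, -⟩ := hYU m
    obtain ⟨hm', hfm, -⟩ := hYM m
    have e1 : (fun i => Set.inclusion hu (x' i)) = x :=
      funext fun i => Subtype.ext (hx' i)
    have e2 : (fun i => Set.inclusion hm' (x' i)) = fun i => Set.inclusion hsub (x i) :=
      funext fun i => Subtype.ext (hx' i)
    calc ((Structure.funMap f x : YU.s) : U)
        = ((Structure.funMap f (fun i => Set.inclusion hu (x' i)) : YU.s) : U) := by rw [e1]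
      _ = ((Structure.funMap f x' : (Y m).s) : U) := (hf k f x').symm
      _ = ((Structure.funMap f (fun i => Set.inclusion hm' (x' i)) : M.s) : U) := hfm k f x'
      _ = ((Structure.funMap f (fun i => Set.inclusion hsub (x i)) : M.s) : U) := by rw [e2]
  · obtain ⟨m, x', hx'⟩ := key k x
    obtain ⟨hu, -, hr⟩ := hYU m
    obtain ⟨hm', -, hrm⟩ := hYM m
    have e1 : (fun i => Set.inclusion hu (x' i)) = x :=
      funext fun i => Subtype.ext (hx' i)
    have e2 : (fun i => Set.inclusion hm' (x' i)) = fun i => Set.inclusion hsub (x i) :=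
      funext fun i => Subtype.ext (hx' i)
    calc Structure.RelMap r x
        ↔ Structure.RelMap r (fun i => Set.inclusion hu (x' i)) := by rw [e1]
      _ ↔ Structure.RelMap r x' := (hr k r x').symm
      _ ↔ Structure.RelMap r (fun i => Set.inclusion hm' (x' i)) := hrm k r x'
      _ ↔ Structure.RelMap r (fun i => Set.inclusion hsub (x i)) := by rw [e2]
/-- The ordinal corresponding to an element of `α.ToType`. -/
noncomputable def tin {α : Ordinal.{u}} (i : α.ToType) : Ordinal.{u} :=
  @Ordinal.typein α.ToType (· < ·) isWellOrder_lt i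

theorem tin_lt_self {α : Ordinal.{u}} (i : α.ToType) : tin i < α := by
  have := @Ordinal.typein_lt_type α.ToType (· < ·) isWellOrder_lt i
  rwa [Ordinal.type_toType] at this

theorem tin_surj {α β : Ordinal.{u}} (h : β < α) : ∃ i : α.ToType, tin i = β :=
  @Ordinal.typein_surj _ _ isWellOrder_lt _ (by rwa [Ordinal.type_toType])

/-- The canonical strategy for Player II when `A ≤_K M`: at each round, respond with a
`≤ K`-substructure of `M` of size `lam` containing `A`, Player I's move, and all previous
responses, chosen by Hilbert's epsilon operator. -/
noncomputable def stratAux (le : SStr L U → SStr L U → Prop) (lam : Cardinal.{u})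
    (M : SStr L U) (A : Set U) (X : Ordinal.{u} → Set U) : Ordinal.{u} → SStr L U :=
  haveI : Nonempty (SStr L U) := ⟨M⟩
  WellFounded.fix Ordinal.lt_wf fun α prev =>
    Classical.epsilon fun N : SStr L U =>
      le N M ∧
        (A ∪ X α ∪ ⋃ i : α.ToType,
          (prev (tin i) (tin_lt_self i)).s)
            ⊆ N.s ∧
        Cardinal.mk N.s = lam

theorem stratAux_eq (le : SStr L U → SStr L U → Prop) (lam : Cardinal.{u})
    (M : SStr L U) (A : Set U) (X : Ordinal.{u} → Set U) (α : Ordinal.{u}) :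
    stratAux le lam M A X α =
      haveI : Nonempty (SStr L U) := ⟨M⟩
      Classical.epsilon fun N : SStr L U =>
        le N M ∧
          (A ∪ X α ∪ ⋃ i : α.ToType,
            (stratAux le lam M A X (tin i)).s) ⊆ N.s ∧
          Cardinal.mk N.s = lam :=
  WellFounded.fix_eq _ _ _

theorem stratAux_congr (le : SStr L U → SStr L U → Prop) (lam : Cardinal.{u})
    (M : SStr L U) (A : Set U) (X X' : Ordinal.{u} → Set U) (α : Ordinal.{u})
    (h : ∀ β ≤ α, X β = X' β) :
    stratAux le lam M A X α = stratAux le lam M A X' α := by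
  induction α using Ordinal.induction with
  | h α IH =>
    rw [stratAux_eq, stratAux_eq]
    have h1 : X α = X' α := h α le_rfl
    have h2 : (⋃ i : α.ToType,
          (stratAux le lam M A X (tin i)).s)
        = ⋃ i : α.ToType,
          (stratAux le lam M A X' (tin i)).s :=
      Set.iUnion_congr fun i => by
        rw [IH _ (tin_lt_self i)
          (fun γ hγ => h γ (hγ.trans (tin_lt_self i).le))]
    rw [h1, h2]
theorem stratAux_spec {K : Set (SStr L U)} {le : SStr L U → SStr L U → Prop}
    {lam : Cardinal.{u}} (hK : IsAEC L U K le lam) {M : SStr L U} (hM : M ∈ K)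
    {A : Set U} (hA : A ⊆ M.s) (hcA : #A ≤ lam) (X : Ordinal.{u} → Set U)
    (α : Ordinal.{u}) :
    α < Ordinal.omega0 * Ordinal.omega0 → (∀ β ≤ α, X β ⊆ M.s ∧ #(X β) ≤ lam) →
      le (stratAux le lam M A X α) M ∧
      (A ∪ X α ∪ ⋃ i : α.ToType,
        (stratAux le lam M A X (tin i)).s)
          ⊆ (stratAux le lam M A X α).s ∧
      #(stratAux le lam M A X α).s = lam := by
  haveI : Nonempty (SStr L U) := ⟨M⟩
  induction α using Ordinal.induction with
  | h α IH =>
    intro hα hX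
    have hprev : ∀ β < α, le (stratAux le lam M A X β) M ∧
        #(stratAux le lam M A X β).s = lam := by
      intro β hβ
      have := IH β hβ (hβ.trans hα) (fun γ hγ => hX γ (hγ.trans hβ.le))
      exact ⟨this.1, this.2.2⟩
    set T : Set U := ⋃ i : α.ToType,
      (stratAux le lam M A X (tin i)).s with hT
    have hTsub : T ⊆ M.s := Set.iUnion_subset fun i =>
      (hK.sub_of_le (hprev _ (tin_lt_self i)).1).subset
    have hTcard : #T ≤ lam := by
      have h1 : #T ≤ Cardinal.sum fun i : α.ToType =>
          #(stratAux le lam M A X (tin i)).s :=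
        Cardinal.mk_iUnion_le_sum_mk
      have h2 : (Cardinal.sum fun i : α.ToType =>
          #(stratAux le lam M A X (tin i)).s)
          ≤ Cardinal.sum fun _ : α.ToType => lam :=
        Cardinal.sum_le_sum _ _ fun i => (hprev _ (tin_lt_self i)).2.le
      have h3 : (Cardinal.sum fun _ : α.ToType => lam) = #α.ToType * lam :=
        Cardinal.sum_const' _ _
      have h4 : #α.ToType ≤ ℵ₀ := by
        rw [Cardinal.mk_toType]
        refine le_trans (Ordinal.card_le_card hα.le) ?_
        rw [Ordinal.card_mul, Ordinal.card_omega0, Cardinal.aleph0_mul_aleph0]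
      calc #T ≤ #α.ToType * lam := by rw [← h3]; exact h1.trans h2
        _ ≤ ℵ₀ * lam := mul_le_mul_left h4 lam
        _ = lam := by
            rw [Cardinal.mul_eq_max le_rfl hK.lam_infinite, max_eq_right hK.lam_infinite]
    have hSsub : A ∪ X α ∪ T ⊆ M.s :=
      Set.union_subset (Set.union_subset hA (hX α le_rfl).1) hTsub
    have hScard : #(A ∪ X α ∪ T : Set U) ≤ lam := by
      calc #(A ∪ X α ∪ T : Set U) ≤ #(A ∪ X α : Set U) + #T := Cardinal.mk_union_le _ _
        _ ≤ #A + #(X α) + #T := add_le_add_left (Cardinal.mk_union_le _ _) _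
        _ ≤ lam + lam + lam :=
            add_le_add (add_le_add hcA (hX α le_rfl).2) hTcard
        _ = lam := by
            rw [Cardinal.add_eq_self hK.lam_infinite, Cardinal.add_eq_self hK.lam_infinite]
    obtain ⟨N, hN1, hN2, hN3⟩ := hK.loewenheim_skolem M hM (A ∪ X α ∪ T) hSsub
    have hNcard : #N.s = lam :=
      le_antisymm
        (hN3.trans ((add_le_add_right hScard lam).trans
          (Cardinal.add_eq_self hK.lam_infinite).le))
        (hK.card_mem N (hK.mem_of_le hN1).1)
    have hex : ∃ N' : SStr L U, le N' M ∧ (A ∪ X α ∪ T) ⊆ N'.s ∧ #N'.s = lam :=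
      ⟨N, hN1, hN2, hNcard⟩
    have hspec := Classical.epsilon_spec hex
    rw [stratAux_eq]
    exact hspec
/-- The play of Player I against a given strategy `σ` of Player II: the first move is
`A`, and each subsequent move is (the universe of) a small `≤ K`-substructure of `M`
containing Player II's previous response. -/
noncomputable def playAux (le : SStr L U → SStr L U → Prop) (lam : Cardinal.{u})
    (M : SStr L U) (A : Set U)
    (σ : (Ordinal.{u} → Set U) → Ordinal.{u} → SStr L U) : Ordinal.{u} → Set U :=
  WellFounded.fix Ordinal.lt_wf fun α prev =>
    if α = 0 then A
    else
      haveI : Nonempty (SStr L U) := ⟨M⟩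
      (Classical.epsilon fun N : SStr L U =>
        le N M ∧ (σ (fun β => if h : β < α then prev β h else ∅) (Ordinal.pred α)).s ⊆ N.s ∧
          Cardinal.mk N.s ≤ lam).s

theorem playAux_eq (le : SStr L U → SStr L U → Prop) (lam : Cardinal.{u})
    (M : SStr L U) (A : Set U) (σ : (Ordinal.{u} → Set U) → Ordinal.{u} → SStr L U)
    (α : Ordinal.{u}) :
    playAux le lam M A σ α =
      if α = 0 then A
      else
        haveI : Nonempty (SStr L U) := ⟨M⟩
        (Classical.epsilon fun N : SStr L U =>
          le N M ∧ (σ (fun β => if h : β < α then playAux le lam M A σ β else ∅)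
            (Ordinal.pred α)).s ⊆ N.s ∧ #N.s ≤ lam).s :=
  WellFounded.fix_eq _ _ _

theorem playAux_zero (le : SStr L U → SStr L U → Prop) (lam : Cardinal.{u})
    (M : SStr L U) (A : Set U) (σ : (Ordinal.{u} → Set U) → Ordinal.{u} → SStr L U) :
    playAux le lam M A σ 0 = A := by
  rw [playAux_eq]; simp

end Helpers

/-- Proposition 3.14 of the paper, game form.  For an AEC `K` with
`lam = LS(K)`, `M ∈ K` and `A ⊆ |M|` of cardinality `lam`, the following are
equivalent: (1) `A` is closed under the interpretations in `M` of the function symbols,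
its induced structure belongs to `K`, and `A ≤_K M`; (2) Player II has a winning
strategy in the modified decomposition game of length `ω · ω` on `M` relative to `A`. -/
theorem strongSub_iff_winsII (L : FirstOrder.Language.{u, u}) (U : Type u)
    (K : Set (SStr L U)) (le : SStr L U → SStr L U → Prop) (lam : Cardinal.{u})
    (hK : IsAEC L U K le lam) (M : SStr L U) (hM : M ∈ K)
    (A : Set U) (hA : A ⊆ M.s) (hcard : #A = lam) :
    (∃ A' : SStr L U, A'.s = A ∧ A'.Sub M ∧ A' ∈ K ∧ le A' M) ↔
      WinsIIFrom K le lam M A (Ordinal.omega0 * Ordinal.omega0) := by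
  haveI : Nonempty (SStr L U) := ⟨M⟩
  constructor
  · rintro ⟨A', hA's, hA'sub, hA'K, hA'le⟩
    refine ⟨stratAux le lam M A, fun X X' α h => stratAux_congr le lam M A X X' α h, ?_⟩
    intro X α hα hX
    have spec := stratAux_spec hK hM hA hcard.le X α hα hX
    have hXsubS : X α ⊆ (stratAux le lam M A X α).s :=
      subset_trans (subset_trans Set.subset_union_right Set.subset_union_left) spec.2.1
    refine ⟨hK.sub_of_le spec.1, hXsubS, spec.2.2, (hK.mem_of_le spec.1).1, ?_, ?_⟩
    · intro β hβ
      have specβ := stratAux_spec hK hM hA hcard.le X β (hβ.trans hα)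
        (fun γ hγ => hX γ (hγ.trans hβ.le))
      have hsubβ : (stratAux le lam M A X β).s ⊆ (stratAux le lam M A X α).s := by
        obtain ⟨i, hi⟩ := tin_surj hβ
        refine subset_trans ?_ (subset_trans Set.subset_union_right spec.2.1)
        intro x hx
        exact Set.mem_iUnion.mpr ⟨i, by rw [hi]; exact hx⟩
      exact hK.coherence specβ.1 spec.1
        (SStr.sub_of_sub_sub (hK.sub_of_le specβ.1) (hK.sub_of_le spec.1) hsubβ)
    · intro h0
      subst h0
      refine ⟨A', hA's, hA'sub, hA'K, ?_⟩
      have hAsub : A ⊆ (stratAux le lam M A X 0).s :=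
        subset_trans (subset_trans Set.subset_union_left Set.subset_union_left) spec.2.1
      exact hK.coherence hA'le spec.1
        (SStr.sub_of_sub_sub hA'sub (hK.sub_of_le spec.1) (by rw [hA's]; exact hAsub))
  · rintro ⟨σ, hσc, hσw⟩
    set X : Ordinal.{u} → Set U := playAux le lam M A σ with hXd
    have hX0 : X 0 = A := playAux_zero le lam M A σ
    have homega : ∀ n : ℕ, (n : Ordinal.{u}) < Ordinal.omega0 * Ordinal.omega0 := fun n =>
      (Ordinal.nat_lt_omega0 n).trans_le (Ordinal.le_mul_right _ Ordinal.omega0_pos)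
    have hXsucc : ∀ n : ℕ, X ((n : Ordinal) + 1) =
        (Classical.epsilon fun N : SStr L U =>
          le N M ∧ (σ X (n : Ordinal)).s ⊆ N.s ∧ #N.s ≤ lam).s := by
      intro n
      have hne : ((n : Ordinal) + 1) ≠ 0 := by
        rw [Ordinal.add_one_eq_succ]; exact Ordinal.succ_ne_zero _
      have hpred : Ordinal.pred ((n : Ordinal) + 1) = (n : Ordinal) := by
        rw [Ordinal.add_one_eq_succ, Ordinal.pred_succ]
      have hfn : σ (fun β => if _ : β < (n : Ordinal) + 1 then playAux le lam M A σ β else ∅)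
          ((n : Ordinal)) = σ (playAux le lam M A σ) (n : Ordinal) := by
        apply hσc
        intro β hβ
        exact dif_pos (hβ.trans_lt (by rw [Ordinal.add_one_eq_succ]; exact Order.lt_succ _))
      rw [hXd]
      rw [playAux_eq le lam M A σ ((n : Ordinal) + 1), if_neg hne, hpred, hfn]
    have key : ∀ n : ℕ, ∀ β ≤ (n : Ordinal), X β ⊆ M.s ∧ #(X β) ≤ lam := by
      intro n
      induction n with
      | zero =>
        intro β hβ
        rw [Nat.cast_zero, nonpos_iff_eq_zero] at hβ
        subst hβ
        rw [hX0]
        exact ⟨hA, hcard.le⟩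
      | succ n IHn =>
        intro β hβ
        rw [Nat.cast_succ] at hβ
        rcases lt_or_eq_of_le hβ with h | h
        · rw [Ordinal.add_one_eq_succ, Order.lt_succ_iff] at h
          exact IHn β h
        · rw [h, hXsucc n]
          have hwinn := hσw X (n : Ordinal) (homega n) IHn
          obtain ⟨N, hN1, hN2, hN3⟩ :=
            hK.loewenheim_skolem M hM (σ X (n : Ordinal)).s hwinn.1.subset
          have hex : ∃ N' : SStr L U, le N' M ∧ (σ X (n : Ordinal)).s ⊆ N'.s ∧ #N'.s ≤ lam :=
            ⟨N, hN1, hN2, hN3.trans (by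
              rw [hwinn.2.2.1]; exact (Cardinal.add_eq_self hK.lam_infinite).le)⟩
          have hspec := Classical.epsilon_spec hex
          exact ⟨(hK.sub_of_le hspec.1).subset, hspec.2.2⟩
    set Nn : ℕ → SStr L U := fun n => Classical.epsilon fun N : SStr L U =>
      le N M ∧ (σ X (n : Ordinal)).s ⊆ N.s ∧ #N.s ≤ lam with hNnd
    have hNs : ∀ n : ℕ, le (Nn n) M ∧ (σ X (n : Ordinal)).s ⊆ (Nn n).s ∧ #(Nn n).s ≤ lam := by
      intro n
      have hwinn := hσw X (n : Ordinal) (homega n) (key n)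
      obtain ⟨N, hN1, hN2, hN3⟩ :=
        hK.loewenheim_skolem M hM (σ X (n : Ordinal)).s hwinn.1.subset
      have hex : ∃ N' : SStr L U, le N' M ∧ (σ X (n : Ordinal)).s ⊆ N'.s ∧ #N'.s ≤ lam :=
        ⟨N, hN1, hN2, hN3.trans (by
          rw [hwinn.2.2.1]; exact (Cardinal.add_eq_self hK.lam_infinite).le)⟩
      exact Classical.epsilon_spec hex
    have hXN : ∀ n : ℕ, X ((n : Ordinal) + 1) = (Nn n).s := fun n => hXsucc n
    have hNY : ∀ n : ℕ, (Nn n).s ⊆ (σ X ((n + 1 : ℕ) : Ordinal)).s := by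
      intro n
      have h2 := (hσw X ((n + 1 : ℕ) : Ordinal) (homega (n + 1)) (key (n + 1))).2.1
      rw [Nat.cast_succ, hXN n] at h2
      exact h2
    have hYle : ∀ n m : ℕ, n < m → le (σ X (n : Ordinal)) (σ X (m : Ordinal)) := fun n m h =>
      (hσw X (m : Ordinal) (homega m) (key m)).2.2.2.2.1 (n : Ordinal) (by exact_mod_cast h)
    have hYmono : ∀ n m : ℕ, n ≤ m → (σ X (n : Ordinal)).s ⊆ (σ X (m : Ordinal)).s := by
      intro n m h
      rcases h.lt_or_eq with h | h
      · exact (hK.sub_of_le (hYle n m h)).subset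
      · rw [h]
    have hNmono : ∀ n m : ℕ, n < m → (Nn n).s ⊆ (Nn m).s := fun n m h =>
      subset_trans (hNY n) (subset_trans (hYmono (n + 1) m h) (hNs m).2.1)
    have hNle : ∀ n m : ℕ, n < m → le (Nn n) (Nn m) := fun n m h =>
      hK.coherence (hNs n).1 (hNs m).1
        (SStr.sub_of_sub_sub (hK.sub_of_le (hNs n).1) (hK.sub_of_le (hNs m).1) (hNmono n m h))
    haveI : WellFoundedLT (ULift.{u} ℕ) := ⟨InvImage.wf ULift.down Nat.lt_wfRel.wf⟩
    haveI : IsWellOrder (ULift.{u} ℕ) (· < ·) := isWellOrder_lt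
    obtain ⟨NU, hNUs, hNUK, hNUle, hNUub⟩ := hK.chain (ULift.{u} ℕ) (fun i => Nn i.down)
      (fun i j hij => hNle _ _ hij) (fun i => (hK.mem_of_le (hNs i.down).1).1)
    obtain ⟨YU, hYUs, hYUK, hYUle, hYUub⟩ := hK.chain (ULift.{u} ℕ)
      (fun i => σ X (i.down : Ordinal)) (fun i j hij => hYle _ _ hij)
      (fun i => (hσw X (i.down : Ordinal) (homega _) (key _)).2.2.2.1)
    have hNUM : le NU M := hNUub M (fun i => (hNs i.down).1)
    have hseteq : NU.s = YU.s := by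
      rw [hNUs, hYUs]
      apply subset_antisymm
      · refine Set.iUnion_subset fun i => subset_trans (hNY i.down) ?_
        exact Set.subset_iUnion (fun j : ULift.{u} ℕ => (σ X (j.down : Ordinal)).s)
          ⟨i.down + 1⟩
      · refine Set.iUnion_subset fun i => subset_trans (hNs i.down).2.1 ?_
        exact Set.subset_iUnion (fun j : ULift.{u} ℕ => (Nn j.down).s) i
    have hYUsN : YU.s = ⋃ n : ℕ, (σ X (n : Ordinal)).s := by
      rw [hYUs]
      apply subset_antisymm
      · exact Set.iUnion_subset fun i =>
          Set.subset_iUnion (fun n : ℕ => (σ X (n : Ordinal)).s) i.down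
      · exact Set.iUnion_subset fun n =>
          Set.subset_iUnion (fun j : ULift.{u} ℕ => (σ X (j.down : Ordinal)).s) ⟨n⟩
    have hYUM : YU.Sub M := SStr.sub_union hYUsN
      (fun n => hK.sub_of_le (hYUle ⟨n⟩)) (fun n => (hσw X (n : Ordinal) (homega n) (key n)).1)
      hYmono
    have hNUYU : NU = YU := SStr.eq_of_sub_sub (hK.sub_of_le hNUM) hYUM hseteq
    have hYUM' : le YU M := hNUYU ▸ hNUM
    obtain ⟨A', hA's, hA'sub, hA'K, hA'le0⟩ :=
      (hσw X ((0 : ℕ) : Ordinal) (homega 0) (key 0)).2.2.2.2.2 (by exact_mod_cast rfl)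
    refine ⟨A', hA's, hA'sub, hA'K, ?_⟩
    have h1 : le A' (σ X ((0 : ℕ) : Ordinal)) := by rw [Nat.cast_zero]; exact hA'le0
    exact hK.le_trans (hK.le_trans h1 (hYUle ⟨0⟩)) hYUM'

end AECFormalization
end

section
/- There are exactly 2^{ℵ₀} isomorphism classes of pairs (M,N), where N is a countable dense linear order without endpoints, M ⊆ N is a suborder of N that is itself a countable dense linear order without endpoints, and two pairs (M₁,N₁), (M₂,N₂) are isomorphic if and only if there is an order isomorphism f : N₁ → N₂ with f(M₁) = M₂. -/
open Cardinal Set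

namespace DLOPair

/-- The "M" part: rationals below 0 or in an interval `(2n+1, 2n+2)`. -/
def Mset : Set ℚ := {q | q < 0 ∨ ∃ n : ℕ, 2*(n:ℚ)+1 < q ∧ q < 2*(n:ℚ)+2}

/-- The `n`-th block: a subset of `(2n, 2n+1)`; a singleton if `n ∈ S`, the whole
interval otherwise. -/
def blk (S : Set ℕ) (n : ℕ) : Set ℚ :=
  {q | 2*(n:ℚ) < q ∧ q < 2*(n:ℚ)+1 ∧ (n ∈ S → q = 2*(n:ℚ)+1/2)}

def Nset (S : Set ℕ) : Set ℚ := Mset ∪ ⋃ n, blk S n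

def wq (n : ℕ) : ℚ := 2*(n:ℚ)+1/2

def idx (q : ℚ) : ℕ := ⌊q/2⌋₊

lemma cast_succ_le {k n : ℕ} (h : (k:ℚ) < n) : (k:ℚ) + 1 ≤ n := by
  exact_mod_cast Nat.succ_le_of_lt (by exact_mod_cast h)

lemma not_mem_Mset {q : ℚ} {n : ℕ} (h1 : 2*(n:ℚ) ≤ q) (h2 : q < 2*(n:ℚ)+1) :
    q ∉ Mset := by
  rintro (h | ⟨k, hk1, hk2⟩)
  · have : (0:ℚ) ≤ (n:ℚ) := Nat.cast_nonneg n
    linarith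
  · have hkn : (k:ℚ) < n := by linarith
    have := cast_succ_le hkn
    linarith

lemma wq_mem_blk (S : Set ℕ) (n : ℕ) : wq n ∈ blk S n :=
  ⟨by norm_num [wq], by norm_num [wq], fun _ => rfl⟩

lemma Mset_subset_Nset (S : Set ℕ) : Mset ⊆ Nset S := subset_union_left

lemma blk_subset_Nset (S : Set ℕ) (n : ℕ) : blk S n ⊆ Nset S :=
  fun q hq => Or.inr (mem_iUnion.2 ⟨n, hq⟩)

lemma blk_not_Mset {S : Set ℕ} {n : ℕ} {q : ℚ} (h : q ∈ blk S n) : q ∉ Mset :=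
  not_mem_Mset h.1.le h.2.1

lemma wq_not_Mset (n : ℕ) : wq n ∉ Mset :=
  blk_not_Mset (wq_mem_blk ∅ n)

lemma idx_eq {q : ℚ} {n : ℕ} (h1 : 2*(n:ℚ) < q) (h2 : q < 2*(n:ℚ)+1) : idx q = n := by
  have h0 : (0:ℚ) ≤ q/2 := by
    have : (0:ℚ) ≤ (n:ℚ) := Nat.cast_nonneg n
    linarith
  rw [idx, Nat.floor_eq_iff (by exact_mod_cast h0)]
  constructor <;> [linarith; linarith]

lemma idx_blk {S : Set ℕ} {n : ℕ} {q : ℚ} (h : q ∈ blk S n) : idx q = n :=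
  idx_eq h.1 h.2.1

lemma mem_blk_idx {S : Set ℕ} {q : ℚ} (hq : q ∈ Nset S) (hm : q ∉ Mset) :
    q ∈ blk S (idx q) := by
  rcases hq with h | h
  · exact absurd h hm
  · obtain ⟨n, hn⟩ := mem_iUnion.1 h
    rwa [idx_blk hn]

lemma blk_idx_lt {S S' : Set ℕ} {x y : ℚ} {i j : ℕ} (hx : x ∈ blk S i) (hy : y ∈ blk S' j)
    (hxy : x < y) (hij : i ≠ j) : i < j := by
  by_contra h
  have hji : j < i := lt_of_le_of_ne (not_lt.1 h) (Ne.symm hij)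
  have : (j:ℚ) + 1 ≤ i := cast_succ_le (by exact_mod_cast hji)
  have := hx.1
  have := hy.2.1
  linarith

lemma noM_of_same {S : Set ℕ} {n : ℕ} {x y m : ℚ} (hx : x ∈ blk S n) (hy : y ∈ blk S n)
    (hm : m ∈ Mset) (h1 : x < m) (h2 : m < y) : False := by
  have := hx.1
  have := hy.2.1
  exact not_mem_Mset (by linarith) (by linarith) hm

lemma M_of_diff {S S' : Set ℕ} {x y : ℚ} {i j : ℕ} (hx : x ∈ blk S i) (hy : y ∈ blk S' j)
    (hxy : x < y) (hij : i ≠ j) : ∃ m ∈ Mset, x < m ∧ m < y := by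
  have hlt : i < j := blk_idx_lt hx hy hxy hij
  have h1 : (i:ℚ) + 1 ≤ j := cast_succ_le (by exact_mod_cast hlt)
  refine ⟨2*(i:ℚ)+3/2, Or.inr ⟨i, by norm_num, by norm_num⟩, ?_, ?_⟩
  · have := hx.2.1; linarith
  · have := hy.1; linarith

lemma mem_blk_of_bounds {S : Set ℕ} {q : ℚ} {n : ℕ} (hq : q ∈ Nset S)
    (h1 : 2*(n:ℚ) ≤ q) (h2 : q ≤ 2*(n:ℚ)+1) : q ∈ blk S n := by
  rcases hq with h | h
  · rcases h with h | ⟨k, hk1, hk2⟩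
    · have : (0:ℚ) ≤ (n:ℚ) := Nat.cast_nonneg n
      linarith
    · have hkn : (k:ℚ) < n := by linarith
      have := cast_succ_le hkn
      linarith
  · obtain ⟨k, hk⟩ := mem_iUnion.1 h
    have hb1 := hk.1
    have hb2 := hk.2.1
    have hkn : k ≤ n := by
      by_contra hc
      have : (n:ℚ) + 1 ≤ k := cast_succ_le (by exact_mod_cast (not_le.1 hc))
      linarith
    have hnk : n ≤ k := by
      by_contra hc
      have : (k:ℚ) + 1 ≤ n := cast_succ_le (by exact_mod_cast (not_le.1 hc))
      linarith
    have : k = n := le_antisymm hkn hnk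
    rwa [this] at hk

/-- Density of `Nset S` (as a set of rationals). -/
lemma Nset_dense {S : Set ℕ} {a b : ℚ} (ha : a ∈ Nset S) (hb : b ∈ Nset S) (hab : a < b) :
    ∃ c ∈ Nset S, a < c ∧ c < b := by
  by_cases h : ∃ m ∈ Mset, a < m ∧ m < b
  · obtain ⟨m, hm, h1, h2⟩ := h
    exact ⟨m, Mset_subset_Nset S hm, h1, h2⟩
  push_neg at h
  -- no M point strictly between a and b
  have ha0 : (0:ℚ) ≤ a := by
    by_contra hc
    push_neg at hc
    obtain ⟨m, hm1, hm2⟩ := exists_between (show a < min b 0 from lt_min hab hc)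
    exact absurd (h m (Or.inl (hm2.trans_le (min_le_right _ _))) hm1)
      (not_le.2 (hm2.trans_le (min_le_left _ _)))
  set n : ℕ := ⌊a/2⌋₊ with hn
  have hna : (n:ℚ) ≤ a/2 := Nat.floor_le (by linarith)
  have hna2 : a/2 < (n:ℚ) + 1 := Nat.lt_floor_add_one _
  by_cases hc : a < 2*(n:ℚ)+1
  · -- claim : b ≤ 2n+1
    have hble : b ≤ 2*(n:ℚ)+1 := by
      by_contra hb'
      push_neg at hb'
      obtain ⟨m, hm1, hm2⟩ := exists_between
        (show max a (2*(n:ℚ)+1) < min b (2*(n:ℚ)+2) from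
          max_lt (lt_min hab (by linarith)) (lt_min hb' (by linarith)))
      exact absurd (h m (Or.inr ⟨n, lt_of_le_of_lt (le_max_right _ _) hm1,
          hm2.trans_le (min_le_right _ _)⟩) (lt_of_le_of_lt (le_max_left _ _) hm1))
        (not_le.2 (hm2.trans_le (min_le_left _ _)))
    have hA : a ∈ blk S n := mem_blk_of_bounds ha (by linarith) hc.le
    have hB : b ∈ blk S n := mem_blk_of_bounds hb (by linarith) hble
    have hns : n ∉ S := by
      intro hnS
      have e1 := hA.2.2 hnS
      have e2 := hB.2.2 hnS
      rw [e1, e2] at hab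
      exact lt_irrefl _ hab
    obtain ⟨c, hc1, hc2⟩ := exists_between hab
    have hcb : c ∈ blk S n := ⟨lt_trans hA.1 hc1, lt_of_lt_of_le hc2 hble,
      fun hs => absurd hs hns⟩
    exact ⟨c, blk_subset_Nset S n hcb, hc1, hc2⟩
  · push_neg at hc
    obtain ⟨m, hm1, hm2⟩ := exists_between (show a < min b (2*(n:ℚ)+2) from lt_min hab (by linarith))
    exact absurd (h m (Or.inr ⟨n, by
        have := lt_min hab (show a < 2*(n:ℚ)+2 by linarith)
        linarith, hm2.trans_le (min_le_right _ _)⟩) hm1)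
      (not_le.2 (hm2.trans_le (min_le_left _ _)))


lemma Mset_noMax (a : ℚ) : ∃ m ∈ Mset, a < m := by
  set n : ℕ := ⌊max a 0⌋₊ with hn
  have h1 : max a 0 < (n:ℚ) + 1 := Nat.lt_floor_add_one _
  have h2 : a ≤ max a 0 := le_max_left _ _
  exact ⟨2*(n:ℚ)+3/2, Or.inr ⟨n, by norm_num, by norm_num⟩, by
    have : (0:ℚ) ≤ (n:ℚ) := Nat.cast_nonneg n
    linarith⟩

lemma Mset_noMin (a : ℚ) : ∃ m ∈ Mset, m < a := by
  refine ⟨min a 0 - 1, Or.inl ?_, ?_⟩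
  · have := min_le_right a 0; linarith
  · have := min_le_left a 0; linarith

lemma Mset_dense {a b : ℚ} (ha : a ∈ Mset) (hb : b ∈ Mset) (hab : a < b) :
    ∃ c ∈ Mset, a < c ∧ c < b := by
  clear ha
  rcases hb with hb | ⟨k, hk1, hk2⟩
  · obtain ⟨c, h1, h2⟩ := exists_between (show max a (b-1) < b from
      max_lt hab (by linarith))
    exact ⟨c, Or.inl (by linarith), lt_of_le_of_lt (le_max_left _ _) h1, h2⟩
  · obtain ⟨c, h1, h2⟩ := exists_between (show max a (2*(k:ℚ)+1) < b from
      max_lt hab hk1)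
    exact ⟨c, Or.inr ⟨k, lt_of_le_of_lt (le_max_right _ _) h1, by linarith⟩,
      lt_of_le_of_lt (le_max_left _ _) h1, h2⟩

lemma neg_mem_Mset (n : ℕ) : (-(n:ℚ)-1) ∈ Mset := by
  left
  have : (0:ℚ) ≤ (n:ℚ) := Nat.cast_nonneg n
  linarith

section Transfer

variable {β : Type*} [LinearOrder β] (f : β → ℚ)
  (hf : ∀ x y : β, x ≤ y ↔ f x ≤ f y)

include hf

lemma transfer_lt : ∀ x y : β, x < y ↔ f x < f y := by
  intro x y
  rw [lt_iff_le_not_ge, lt_iff_le_not_ge, hf x y, hf y x]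

lemma transfer_dense (T : Set ℚ) (hr : ∀ x, f x ∈ T) (hsurj : ∀ q ∈ T, ∃ x, f x = q)
    (hT : ∀ a b, a ∈ T → b ∈ T → a < b → ∃ c ∈ T, a < c ∧ c < b) :
    DenselyOrdered β := by
  constructor
  intro x y hxy
  obtain ⟨c, hc, h1, h2⟩ := hT _ _ (hr x) (hr y) ((transfer_lt f hf x y).1 hxy)
  obtain ⟨z, rfl⟩ := hsurj c hc
  exact ⟨z, (transfer_lt f hf x z).2 h1, (transfer_lt f hf z y).2 h2⟩

lemma transfer_noMax (T : Set ℚ) (hr : ∀ x, f x ∈ T) (hsurj : ∀ q ∈ T, ∃ x, f x = q)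
    (hT : ∀ a, a ∈ T → ∃ c ∈ T, a < c) : NoMaxOrder β := by
  constructor
  intro x
  obtain ⟨c, hc, h1⟩ := hT _ (hr x)
  obtain ⟨z, rfl⟩ := hsurj c hc
  exact ⟨z, (transfer_lt f hf x z).2 h1⟩

lemma transfer_noMin (T : Set ℚ) (hr : ∀ x, f x ∈ T) (hsurj : ∀ q ∈ T, ∃ x, f x = q)
    (hT : ∀ a, a ∈ T → ∃ c ∈ T, c < a) : NoMinOrder β := by
  constructor
  intro x
  obtain ⟨c, hc, h1⟩ := hT _ (hr x)
  obtain ⟨z, rfl⟩ := hsurj c hc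
  exact ⟨z, (transfer_lt f hf z x).2 h1⟩

end Transfer

lemma Nset_infinite (S : Set ℕ) : Infinite ↥(Nset S) := by
  have : Function.Injective (fun n : ℕ => (⟨-(n:ℚ)-1,
      Mset_subset_Nset S (neg_mem_Mset n)⟩ : ↥(Nset S))) := by
    intro m n h
    have := congrArg Subtype.val h
    simp only at this
    have : (m:ℚ) = n := by linarith
    exact_mod_cast this
  exact Infinite.of_injective _ this

noncomputable instance NsetOrder (S : Set ℕ) : Nonempty (ℕ ≃ ↥(Nset S)) := by
  have := Nset_infinite S
  rw [← Cardinal.eq, Cardinal.mk_eq_aleph0, Cardinal.mk_eq_aleph0]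

section Inj

variable {S S' : Set ℕ} (G : ↥(Nset S) ≃ ↥(Nset S'))
  (hord : ∀ x y : ↥(Nset S), (x:ℚ) ≤ (y:ℚ) ↔ ((G x : ℚ)) ≤ ((G y : ℚ)))
  (hM : ∀ x : ↥(Nset S), (x:ℚ) ∈ Mset ↔ ((G x : ℚ)) ∈ Mset)

include hord

lemma G_lt : ∀ x y : ↥(Nset S), (x:ℚ) < (y:ℚ) ↔ ((G x : ℚ)) < ((G y : ℚ)) := by
  intro x y
  rw [lt_iff_le_not_ge, lt_iff_le_not_ge, hord x y, hord y x]

include hM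

lemma G_symm_ord : ∀ x y : ↥(Nset S'), (x:ℚ) ≤ (y:ℚ) ↔
    ((G.symm x : ℚ)) ≤ ((G.symm y : ℚ)) := by
  intro x y
  rw [hord (G.symm x) (G.symm y), G.apply_symm_apply, G.apply_symm_apply]

lemma G_symm_M : ∀ x : ↥(Nset S'), (x:ℚ) ∈ Mset ↔ ((G.symm x : ℚ)) ∈ Mset := by
  intro x
  rw [hM (G.symm x), G.apply_symm_apply]

/-- If there is no `Mset` point between `x` and `y`, the same holds for images. -/
lemma G_sameblk {x y : ↥(Nset S)} (hx : (x:ℚ) ∉ Mset) (hy : (y:ℚ) ∉ Mset)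
    (hxy : idx (x:ℚ) = idx (y:ℚ)) : idx ((G x : ℚ)) = idx ((G y : ℚ)) := by
  -- wlog over trichotomy
  have key : ∀ u v : ↥(Nset S), (u:ℚ) ∉ Mset → (v:ℚ) ∉ Mset → (u:ℚ) < (v:ℚ) →
      idx (u:ℚ) = idx (v:ℚ) → idx ((G u : ℚ)) = idx ((G v : ℚ)) := by
    intro u v hu hv huv hidx
    by_contra hne
    have hGu : ((G u : ℚ)) ∈ blk S' (idx ((G u : ℚ))) :=
      mem_blk_idx (G u).2 ((hM u).not.1 hu)
    have hGv : ((G v : ℚ)) ∈ blk S' (idx ((G v : ℚ))) :=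
      mem_blk_idx (G v).2 ((hM v).not.1 hv)
    obtain ⟨m, hm, h1, h2⟩ := M_of_diff hGu hGv ((G_lt G hord u v).1 huv) hne
    -- pull back m
    set m' : ↥(Nset S) := G.symm ⟨m, Mset_subset_Nset S' hm⟩ with hm'
    have hmv : ((G m' : ℚ)) = m := by rw [hm', G.apply_symm_apply]
    have hmM : (m' : ℚ) ∈ Mset := (hM m').2 (by rw [hmv]; exact hm)
    have hum : (u:ℚ) < (m':ℚ) := (G_lt G hord u m').2 (by rw [hmv]; exact h1)
    have hmv2 : (m':ℚ) < (v:ℚ) := (G_lt G hord m' v).2 (by rw [hmv]; exact h2)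
    exact noM_of_same (mem_blk_idx u.2 hu) (hidx ▸ mem_blk_idx v.2 hv) hmM hum hmv2
  rcases lt_trichotomy (x:ℚ) (y:ℚ) with h | h | h
  · exact key x y hx hy h hxy
  · rw [Subtype.ext h]
  · exact (key y x hy hx h hxy.symm).symm

/-- In the other case, order of block indices is preserved. -/
lemma G_diffblk {x y : ↥(Nset S)} (hx : (x:ℚ) ∉ Mset) (hy : (y:ℚ) ∉ Mset)
    (hxy : (x:ℚ) < (y:ℚ)) (hidx : idx (x:ℚ) ≠ idx (y:ℚ)) :
    idx ((G x : ℚ)) < idx ((G y : ℚ)) := by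
  obtain ⟨m, hm, h1, h2⟩ := M_of_diff (mem_blk_idx x.2 hx) (mem_blk_idx y.2 hy) hxy hidx
  set m' : ↥(Nset S) := ⟨m, Mset_subset_Nset S hm⟩ with hmdef
  have hGm : ((G m' : ℚ)) ∈ Mset := (hM m').1 hm
  have h1' : ((G x : ℚ)) < ((G m' : ℚ)) := (G_lt G hord x m').1 h1
  have h2' : ((G m' : ℚ)) < ((G y : ℚ)) := (G_lt G hord m' y).1 h2
  have hxM : ((G x : ℚ)) ∉ Mset := (hM x).not.1 hx
  have hyM : ((G y : ℚ)) ∉ Mset := (hM y).not.1 hy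
  have hGx := mem_blk_idx (G x).2 hxM
  have hGy := mem_blk_idx (G y).2 hyM
  have hne : idx ((G x : ℚ)) ≠ idx ((G y : ℚ)) := by
    intro he
    exact noM_of_same hGx (he ▸ hGy) hGm h1' h2'
  exact blk_idx_lt hGx hGy ((G_lt G hord x y).1 hxy) hne

/-- The induced map on block indices. -/
noncomputable def gIdx : ℕ → ℕ :=
  fun n => idx ((G ⟨wq n, blk_subset_Nset S n (wq_mem_blk S n)⟩ : ℚ))

lemma gIdx_strictMono : StrictMono (gIdx G) := by
  intro n m hnm
  apply G_diffblk G hord hM (wq_not_Mset n) (wq_not_Mset m)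
  · show wq n < wq m
    have : (n:ℚ) < m := by exact_mod_cast hnm
    simp only [wq]
    linarith
  · rw [idx_blk (wq_mem_blk S n), idx_blk (wq_mem_blk S m)]
    omega

lemma gIdx_comp (n : ℕ) : gIdx G.symm (gIdx G n) = n := by
  set x : ↥(Nset S) := ⟨wq n, blk_subset_Nset S n (wq_mem_blk S n)⟩ with hx
  set k := idx ((G x : ℚ)) with hk
  have hxM : (x:ℚ) ∉ Mset := wq_not_Mset n
  have hGxM : ((G x : ℚ)) ∉ Mset := (hM x).not.1 hxM
  set z : ↥(Nset S') := ⟨wq k, blk_subset_Nset S' k (wq_mem_blk S' k)⟩ with hz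
  have hzM : (z:ℚ) ∉ Mset := wq_not_Mset k
  have hidx : idx (z:ℚ) = idx ((G x : ℚ)) := by
    rw [← hk]
    exact idx_blk (wq_mem_blk S' k)
  have := G_sameblk G.symm (G_symm_ord G hord hM) (G_symm_M G hord hM) hzM hGxM hidx
  rw [G.symm_apply_apply] at this
  have hxidx : idx (x:ℚ) = n := idx_blk (wq_mem_blk S n)
  rw [hxidx] at this
  exact this

lemma gIdx_id (n : ℕ) : gIdx G n = n := by
  have h1 : n ≤ gIdx G n := (gIdx_strictMono G hord hM).le_apply
  have h2 : gIdx G n ≤ gIdx G.symm (gIdx G n) :=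
    (gIdx_strictMono G.symm (G_symm_ord G hord hM) (G_symm_M G hord hM)).le_apply
  rw [gIdx_comp G hord hM n] at h2
  exact le_antisymm h2 h1

lemma subset_aux : S' ⊆ S := by
  intro n hn'
  by_contra hn
  -- two distinct points in block n of S
  set u : ↥(Nset S) := ⟨2*(n:ℚ)+1/3, blk_subset_Nset S n
    ⟨by norm_num, by norm_num, fun hs => absurd hs hn⟩⟩ with hu
  set v : ↥(Nset S) := ⟨wq n, blk_subset_Nset S n (wq_mem_blk S n)⟩ with hv
  have hub : (u:ℚ) ∈ blk S n := ⟨by show 2*(n:ℚ) < 2*(n:ℚ)+1/3; norm_num,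
    by show 2*(n:ℚ)+1/3 < 2*(n:ℚ)+1; norm_num, fun hs => absurd hs hn⟩
  have huM : (u:ℚ) ∉ Mset := blk_not_Mset hub
  have hvM : (v:ℚ) ∉ Mset := wq_not_Mset n
  have hidx : idx (u:ℚ) = idx (v:ℚ) := by
    rw [idx_blk hub, idx_blk (wq_mem_blk S n)]
  have heq := G_sameblk G hord hM huM hvM hidx
  have hvn : idx ((G v : ℚ)) = n := gIdx_id G hord hM n
  rw [hvn] at heq
  -- both images lie in blk S' n, which is a singleton since n ∈ S'
  have hGu : ((G u : ℚ)) ∈ blk S' n := heq ▸ mem_blk_idx (G u).2 ((hM u).not.1 huM)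
  have hGv : ((G v : ℚ)) ∈ blk S' n := hvn ▸ mem_blk_idx (G v).2 ((hM v).not.1 hvM)
  have : ((G u : ℚ)) = ((G v : ℚ)) := by rw [hGu.2.2 hn', hGv.2.2 hn']
  have : u = v := G.injective (Subtype.ext this)
  have := congrArg Subtype.val this
  simp only [hu, hv, wq] at this
  linarith

end Inj

section Pair

variable (α : Type) (e0 : α ≃ ℕ)

noncomputable def emb (S : Set ℕ) : α ≃ ↥(Nset S) :=
  e0.trans (Classical.choice (NsetOrder S))

noncomputable def L (S : Set ℕ) : LinearOrder α :=
  LinearOrder.lift' (fun a => ((emb α e0 S a : ℚ)))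
    (fun a b h => (emb α e0 S).injective (Subtype.ext h))

def Msub (S : Set ℕ) : Set α := {a | ((emb α e0 S a : ℚ)) ∈ Mset}

lemma L_le (S : Set ℕ) (a b : α) :
    (L α e0 S).le a b ↔ ((emb α e0 S a : ℚ)) ≤ ((emb α e0 S b : ℚ)) := Iff.rfl

lemma pair_props (S : Set ℕ) :
    (letI := L α e0 S; DenselyOrdered α ∧ NoMaxOrder α ∧ NoMinOrder α) ∧
    (letI := L α e0 S; Infinite ↥(Msub α e0 S) ∧ DenselyOrdered ↥(Msub α e0 S) ∧
      NoMaxOrder ↥(Msub α e0 S) ∧ NoMinOrder ↥(Msub α e0 S)) := by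
  letI := L α e0 S
  have hf : ∀ x y : α, x ≤ y ↔ ((emb α e0 S x : ℚ)) ≤ ((emb α e0 S y : ℚ)) :=
    fun _ _ => Iff.rfl
  have hsurj : ∀ q ∈ Nset S, ∃ x : α, ((emb α e0 S x : ℚ)) = q := by
    intro q hq
    exact ⟨(emb α e0 S).symm ⟨q, hq⟩, by rw [Equiv.apply_symm_apply]⟩
  have hfM : ∀ x y : ↥(Msub α e0 S), x ≤ y ↔
      ((emb α e0 S x.1 : ℚ)) ≤ ((emb α e0 S y.1 : ℚ)) := fun _ _ => Iff.rfl
  have hsurjM : ∀ q ∈ Mset, ∃ x : ↥(Msub α e0 S), ((emb α e0 S x.1 : ℚ)) = q := by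
    intro q hq
    refine ⟨⟨(emb α e0 S).symm ⟨q, Mset_subset_Nset S hq⟩,
      show ((emb α e0 S ((emb α e0 S).symm ⟨q, Mset_subset_Nset S hq⟩) : ℚ)) ∈ Mset from ?_⟩, ?_⟩ <;>
      rw [Equiv.apply_symm_apply]
    exact hq
  refine ⟨⟨?_, ?_, ?_⟩, ?_, ?_, ?_, ?_⟩
  · exact transfer_dense _ hf (Nset S) (fun x => (emb α e0 S x).2) hsurj
      (fun a b ha hb hab => Nset_dense ha hb hab)
  · exact transfer_noMax _ hf (Nset S) (fun x => (emb α e0 S x).2) hsurj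
      (fun a _ => by
        obtain ⟨m, hm, h1⟩ := Mset_noMax a
        exact ⟨m, Mset_subset_Nset S hm, h1⟩)
  · exact transfer_noMin _ hf (Nset S) (fun x => (emb α e0 S x).2) hsurj
      (fun a _ => by
        obtain ⟨m, hm, h1⟩ := Mset_noMin a
        exact ⟨m, Mset_subset_Nset S hm, h1⟩)
  · -- Infinite
    refine Infinite.of_injective
      (fun n : ℕ => (⟨(emb α e0 S).symm ⟨-(n:ℚ)-1, Mset_subset_Nset S (neg_mem_Mset n)⟩,
        show ((emb α e0 S _ : ℚ)) ∈ Mset by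
          rw [Equiv.apply_symm_apply]; exact neg_mem_Mset n⟩ : ↥(Msub α e0 S))) ?_
    intro m n h
    have h2 := congrArg (fun x : ↥(Msub α e0 S) => ((emb α e0 S x.1 : ℚ))) h
    simp only [Equiv.apply_symm_apply] at h2
    have : (m:ℚ) = n := by linarith
    exact_mod_cast this
  · exact transfer_dense _ hfM Mset (fun x => x.2) hsurjM
      (fun a b ha hb hab => Mset_dense ha hb hab)
  · exact transfer_noMax _ hfM Mset (fun x => x.2) hsurjM (fun a _ => Mset_noMax a)
  · exact transfer_noMin _ hfM Mset (fun x => x.2) hsurjM (fun a _ => Mset_noMin a)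

end Pair

def PairT (α : Type) : Type :=
  {x : LinearOrder α × Set α //
    (letI := x.1
     DenselyOrdered α ∧ NoMaxOrder α ∧ NoMinOrder α) ∧
    (letI := x.1
     Infinite x.2 ∧ DenselyOrdered x.2 ∧ NoMaxOrder x.2 ∧ NoMinOrder x.2)}

def Rel (α : Type) : PairT α → PairT α → Prop := fun p q =>
  ∃ f : α ≃ α, (∀ a b : α, p.1.1.le a b ↔ q.1.1.le (f a) (f b)) ∧
    ∀ a : α, a ∈ p.1.2 ↔ f a ∈ q.1.2

lemma Rel_equiv (α : Type) : Equivalence (Rel α) := by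
  constructor
  · exact fun p => ⟨Equiv.refl α, fun a b => Iff.rfl, fun a => Iff.rfl⟩
  · rintro p q ⟨f, h1, h2⟩
    exact ⟨f.symm, fun a b => by
        rw [h1 (f.symm a) (f.symm b), f.apply_symm_apply, f.apply_symm_apply],
      fun a => by rw [h2 (f.symm a), f.apply_symm_apply]⟩
  · rintro p q r ⟨f, h1, h2⟩ ⟨g, g1, g2⟩
    exact ⟨f.trans g, fun a b => (h1 a b).trans (g1 (f a) (f b)),
      fun a => (h2 a).trans (g2 (f a))⟩

noncomputable def pairOf (α : Type) (e0 : α ≃ ℕ) (S : Set ℕ) : PairT α :=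
  ⟨(L α e0 S, Msub α e0 S), pair_props α e0 S⟩

lemma pairOf_inj (α : Type) (e0 : α ≃ ℕ) {S S' : Set ℕ}
    (h : Rel α (pairOf α e0 S) (pairOf α e0 S')) : S = S' := by
  obtain ⟨f, hle, hmem⟩ := h
  set G : ↥(Nset S) ≃ ↥(Nset S') :=
    ((emb α e0 S).symm.trans f).trans (emb α e0 S') with hG
  have hord : ∀ x y : ↥(Nset S), (x:ℚ) ≤ (y:ℚ) ↔ ((G x : ℚ)) ≤ ((G y : ℚ)) := by
    intro x y
    rw [show (x:ℚ) = ((emb α e0 S ((emb α e0 S).symm x) : ℚ)) by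
        rw [Equiv.apply_symm_apply],
      show (y:ℚ) = ((emb α e0 S ((emb α e0 S).symm y) : ℚ)) by
        rw [Equiv.apply_symm_apply]]
    exact hle ((emb α e0 S).symm x) ((emb α e0 S).symm y)
  have hM : ∀ x : ↥(Nset S), (x:ℚ) ∈ Mset ↔ ((G x : ℚ)) ∈ Mset := by
    intro x
    rw [show (x:ℚ) = ((emb α e0 S ((emb α e0 S).symm x) : ℚ)) by
        rw [Equiv.apply_symm_apply]]
    exact hmem ((emb α e0 S).symm x)
  exact Set.Subset.antisymm
    (subset_aux G.symm (G_symm_ord G hord hM) (G_symm_M G hord hM))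
    (subset_aux G hord hM)

end DLOPair

open DLOPair in
/-- Example 3.3(3) of the paper.  There are exactly `2 ^ ℵ₀`
isomorphism classes of pairs `(M, N)` where `N` is a countable dense linear order
without endpoints (realized as a linear order on a fixed countably infinite universe
`α`), `M ⊆ N` is a suborder which is itself a countable dense linear order without
endpoints, and `(M₁, N₁) ≅ (M₂, N₂)` iff there is an order isomorphism `f : N₁ ≅ N₂`
with `f(M₁) = M₂`. -/
theorem dlo_pair_classes (α : Type) (hα : #α = ℵ₀) :
    #(Quot fun p q : {x : LinearOrder α × Set α //
        (letI := x.1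
         DenselyOrdered α ∧ NoMaxOrder α ∧ NoMinOrder α) ∧
        (letI := x.1
         Infinite x.2 ∧ DenselyOrdered x.2 ∧ NoMaxOrder x.2 ∧ NoMinOrder x.2)} =>
      ∃ f : α ≃ α, (∀ a b : α, p.1.1.le a b ↔ q.1.1.le (f a) (f b)) ∧
        ∀ a : α, a ∈ p.1.2 ↔ f a ∈ q.1.2) = 2 ^ ℵ₀ := by
  show #(Quot (Rel α)) = 2 ^ ℵ₀
  obtain ⟨e0⟩ : Nonempty (α ≃ ℕ) := Cardinal.eq.1 (by rw [hα, Cardinal.mk_nat])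
  apply le_antisymm
  · have hLO : #(LinearOrder α) ≤ 2 ^ ℵ₀ := by
      have hinj : Function.Injective (fun L : LinearOrder α => (L.le : α → α → Prop)) := by
        intro A B h
        exact LinearOrder.ext fun x y => iff_of_eq (congrFun (congrFun h x) y)
      have h2 : #(α → α → Prop) = 2 ^ ℵ₀ := by
        rw [Cardinal.mk_congr (Equiv.curry α α Prop).symm]
        rw [show #(α × α → Prop) = #(Set (α × α)) from rfl, Cardinal.mk_set]
        simp [Cardinal.mk_prod, hα]
      exact h2 ▸ Cardinal.mk_le_of_injective hinj
    calc #(Quot (Rel α)) ≤ #(PairT α) := Cardinal.mk_quot_le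
      _ ≤ #(LinearOrder α × Set α) := Cardinal.mk_subtype_le _
      _ = #(LinearOrder α) * #(Set α) := by
          simp [Cardinal.mk_prod]
      _ ≤ 2 ^ ℵ₀ * 2 ^ ℵ₀ := by
          refine mul_le_mul' hLO (le_of_eq ?_)
          rw [Cardinal.mk_set, hα]
      _ = 2 ^ ℵ₀ := by rw [← Cardinal.power_add, Cardinal.aleph0_add_aleph0]
  · have hFinj : Function.Injective (fun S : Set ℕ => Quot.mk (Rel α) (pairOf α e0 S)) := by
      intro S S' h
      exact pairOf_inj α e0 (((Rel_equiv α).eqvGen_iff).1 (Quot.eqvGen_exact h))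
    calc (2 : Cardinal) ^ ℵ₀ = #(Set ℕ) := by rw [Cardinal.mk_set, Cardinal.mk_nat]
      _ ≤ #(Quot (Rel α)) := Cardinal.mk_le_of_injective hFinj
end
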